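/- arXiv:2112.02253 — 10 statements merged into one kernel-verified Lean document; each statement's English description precedes it below -/
import Mathlib

section
/- Let n ≥ 3 and let P_n be the path graph on vertex set {0,…,n−1} (i adjacent to j iff |i−j| = 1). Then the invariant ρ(P_n) := Σ_{i=1}^{n−1} (−1)^i Σ_{S ⊆ {0,…,n−1}, |S| = i} H₀(P_n[S]) equals (−1)^{n−1}. -/
/-- For a simple graph `G` and a set of vertices `S`, the number of connected
components of the induced subgraph `G[S]`. -/
noncomputable def H0 {V : Type*} (G : SimpleGraph V) (S : Set V) : ℕ :=
  Nat.card (G.induce S).ConnectedComponent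

open Finset SimpleGraph

/-- left endpoints of runs -/
def LEnd (n : ℕ) (S : Finset (Fin n)) : Finset (Fin n) :=
  S.filter (fun v => ∀ w : Fin n, (w : ℕ) + 1 = (v : ℕ) → w ∉ S)

lemma cross {n : ℕ} {S : Finset (Fin n)} (t : ℕ) :
    ∀ {a b : (↑S : Set (Fin n))} (_ : ((SimpleGraph.pathGraph n).induce ↑S).Walk a b),
    t ≤ ((a : Fin n) : ℕ) → ((b : Fin n) : ℕ) < t →
    ∃ x : Fin n, x ∈ S ∧ (x : ℕ) + 1 = t := by
  intro a b p
  induction p with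
  | nil => intro h1 h2; omega
  | @cons u v w h p ih =>
    intro h1 h2
    by_cases hc : t ≤ ((v : Fin n) : ℕ)
    · exact ih hc h2
    · have hadj : ((u : Fin n) : ℕ) + 1 = ((v : Fin n) : ℕ) ∨
          ((v : Fin n) : ℕ) + 1 = ((u : Fin n) : ℕ) := by
        have := (SimpleGraph.comap_adj).mp h
        exact (SimpleGraph.pathGraph_adj).mp this
      exact ⟨(v : Fin n), Finset.mem_coe.mp v.2, by omega⟩

lemma reach {n : ℕ} {S : Finset (Fin n)} :
    ∀ (d : ℕ) (a b : Fin n) (ha : a ∈ S) (hb : b ∈ S), (b : ℕ) = (a : ℕ) + d →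
    (∀ (j : ℕ) (hj : j < n), (a : ℕ) ≤ j → j ≤ (b : ℕ) → (⟨j, hj⟩ : Fin n) ∈ S) →
    ((SimpleGraph.pathGraph n).induce ↑S).Reachable ⟨a, Finset.mem_coe.mpr ha⟩
      ⟨b, Finset.mem_coe.mpr hb⟩ := by
  intro d
  induction d with
  | zero =>
    intro a b ha hb hd _
    have : a = b := Fin.ext (by omega)
    subst this; exact Reachable.refl _
  | succ d ih =>
    intro a b ha hb hd hint
    have hlt : (a : ℕ) + 1 < n := by have := b.isLt; omega
    set c : Fin n := ⟨(a : ℕ) + 1, hlt⟩ with hc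
    have hcS : c ∈ S := hint _ hlt (by omega) (by omega)
    have hadj : ((SimpleGraph.pathGraph n).induce ↑S).Adj
        ⟨a, Finset.mem_coe.mpr ha⟩ ⟨c, Finset.mem_coe.mpr hcS⟩ := by
      rw [SimpleGraph.comap_adj, SimpleGraph.pathGraph_adj]
      left; rfl
    have hr := ih c b hcS hb (by simp [hc]; omega)
      (fun j hj h1 h2 => hint j hj (by simp [hc] at h1; omega) h2)
    exact hadj.reachable.trans hr

lemma exists_lend {n : ℕ} {S : Finset (Fin n)} :
    ∀ (m : ℕ) (u : Fin n), (u : ℕ) ≤ m → ∀ (hu : u ∈ S),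
    ∃ (v : Fin n) (hv : v ∈ S), v ∈ LEnd n S ∧
      ((SimpleGraph.pathGraph n).induce ↑S).Reachable ⟨v, Finset.mem_coe.mpr hv⟩
        ⟨u, Finset.mem_coe.mpr hu⟩ := by
  intro m
  induction m with
  | zero =>
    intro u hum hu
    refine ⟨u, hu, ?_, Reachable.refl _⟩
    refine Finset.mem_filter.mpr ⟨hu, fun w hw _ => ?_⟩
    omega
  | succ m ih =>
    intro u hum hu
    by_cases h : u ∈ LEnd n S
    · exact ⟨u, hu, h, Reachable.refl _⟩
    · rw [LEnd, Finset.mem_filter] at h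
      push_neg at h
      obtain ⟨w, hw1, hw2⟩ := h hu
      obtain ⟨v, hv, hvL, hr⟩ := ih w (by omega) hw2
      have hadj : ((SimpleGraph.pathGraph n).induce ↑S).Adj
          ⟨w, Finset.mem_coe.mpr hw2⟩ ⟨u, Finset.mem_coe.mpr hu⟩ := by
        rw [SimpleGraph.comap_adj, SimpleGraph.pathGraph_adj]
        left; exact hw1
      exact ⟨v, hv, hvL, hr.trans hadj.reachable⟩

lemma H0_eq_card_lend {n : ℕ} (S : Finset (Fin n)) :
    H0 (SimpleGraph.pathGraph n) (↑S : Set (Fin n)) = (LEnd n S).card := by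
  classical
  have hmem : ∀ v ∈ LEnd n S, v ∈ (↑S : Set (Fin n)) := fun v hv =>
    Finset.mem_coe.mpr (Finset.mem_filter.mp hv).1
  set G' := (SimpleGraph.pathGraph n).induce (↑S : Set (Fin n)) with hG'
  let f : {v // v ∈ LEnd n S} → G'.ConnectedComponent :=
    fun v => G'.connectedComponentMk ⟨v.1, hmem v.1 v.2⟩
  have hbij : Function.Bijective f := by
    constructor
    · intro v w hvw
      have hr : G'.Reachable ⟨v.1, hmem v.1 v.2⟩ ⟨w.1, hmem w.1 w.2⟩ :=
        (SimpleGraph.ConnectedComponent.eq).mp (hvw : f v = f w)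
      by_contra hne
      have hne' : (v.1 : ℕ) ≠ (w.1 : ℕ) := by
        intro h; exact hne (Subtype.ext (Fin.ext h))
      rcases lt_or_gt_of_ne hne' with hlt | hlt
      · -- v < w : walk from w to v crosses t = w
        obtain ⟨p⟩ := hr.symm
        obtain ⟨x, hxS, hx⟩ := cross ((w.1 : ℕ)) p (le_refl _) hlt
        exact (Finset.mem_filter.mp w.2).2 x hx hxS
      · obtain ⟨p⟩ := hr
        obtain ⟨x, hxS, hx⟩ := cross ((v.1 : ℕ)) p (le_refl _) hlt
        exact (Finset.mem_filter.mp v.2).2 x hx hxS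
    · intro C
      induction C using SimpleGraph.ConnectedComponent.ind with
      | _ u =>
        have huS : (u : Fin n) ∈ S := Finset.mem_coe.mp u.2
        obtain ⟨v, hv, hvL, hr⟩ := exists_lend ((u : Fin n) : ℕ) (u : Fin n) le_rfl huS
        refine ⟨⟨v, hvL⟩, ?_⟩
        have : (⟨(u : Fin n), Finset.mem_coe.mpr huS⟩ : (↑S : Set (Fin n))) = u :=
          Subtype.ext rfl
        rw [show f ⟨v, hvL⟩ = G'.connectedComponentMk ⟨v, hmem v hvL⟩ from rfl, ← this]
        exact SimpleGraph.ConnectedComponent.sound hr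
  rw [H0]
  rw [Nat.card_eq_of_bijective f hbij |>.symm]
  simp [Nat.card_eq_fintype_card]

lemma count_mem {α : Type*} [DecidableEq α] [Fintype α] (a : α) (i : ℕ) :
    (((Finset.univ : Finset α).powersetCard (i + 1)).filter (fun S => a ∈ S)).card
      = (Fintype.card α - 1).choose i := by
  rw [show Fintype.card α - 1 = ((Finset.univ : Finset α).erase a).card by
      rw [Finset.card_erase_of_mem (Finset.mem_univ a), Finset.card_univ],
    ← Finset.card_powersetCard i ((Finset.univ : Finset α).erase a)]
  refine Finset.card_bij' (fun S _ => S.erase a) (fun T _ => insert a T) ?_ ?_ ?_ ?_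
  · intro S hS
    rw [Finset.mem_filter, Finset.mem_powersetCard] at hS
    rw [Finset.mem_powersetCard]
    refine ⟨fun x hx => Finset.mem_erase.mpr ⟨(Finset.mem_erase.mp hx).1,
      Finset.mem_univ x⟩, ?_⟩
    rw [Finset.card_erase_of_mem hS.2, hS.1.2]
    omega
  · intro T hT
    rw [Finset.mem_powersetCard] at hT
    rw [Finset.mem_filter, Finset.mem_powersetCard]
    have haT : a ∉ T := fun h => (Finset.mem_erase.mp (hT.1 h)).1 rfl
    exact ⟨⟨Finset.subset_univ _, by rw [Finset.card_insert_of_notMem haT, hT.2]⟩,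
      Finset.mem_insert_self a T⟩
  · intro S hS
    rw [Finset.mem_filter] at hS
    exact Finset.insert_erase hS.2
  · intro T hT
    rw [Finset.mem_powersetCard] at hT
    exact Finset.erase_insert (fun h => (Finset.mem_erase.mp (hT.1 h)).1 rfl)

lemma count_mem_notmem {α : Type*} [DecidableEq α] [Fintype α] (a b : α) (hab : a ≠ b)
    (i : ℕ) :
    (((Finset.univ : Finset α).powersetCard (i + 1)).filter
        (fun S => a ∈ S ∧ b ∉ S)).card
      = (Fintype.card α - 2).choose i := by
  have hcard : (((Finset.univ : Finset α).erase b).erase a).card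
      = Fintype.card α - 2 := by
    rw [Finset.card_erase_of_mem (Finset.mem_erase.mpr ⟨hab, Finset.mem_univ a⟩),
      Finset.card_erase_of_mem (Finset.mem_univ b), Finset.card_univ]
    omega
  rw [← hcard, ← Finset.card_powersetCard i (((Finset.univ : Finset α).erase b).erase a)]
  refine Finset.card_bij' (fun S _ => S.erase a) (fun T _ => insert a T) ?_ ?_ ?_ ?_
  · intro S hS
    rw [Finset.mem_filter, Finset.mem_powersetCard] at hS
    rw [Finset.mem_powersetCard]
    refine ⟨fun x hx => ?_, by rw [Finset.card_erase_of_mem hS.2.1, hS.1.2]; omega⟩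
    rcases Finset.mem_erase.mp hx with ⟨hxa, hxS⟩
    exact Finset.mem_erase.mpr ⟨hxa, Finset.mem_erase.mpr
      ⟨fun h => hS.2.2 (h ▸ hxS), Finset.mem_univ x⟩⟩
  · intro T hT
    rw [Finset.mem_powersetCard] at hT
    rw [Finset.mem_filter, Finset.mem_powersetCard]
    have haT : a ∉ T := fun h => (Finset.mem_erase.mp (hT.1 h)).1 rfl
    have hbT : b ∉ insert a T := by
      intro h
      rcases Finset.mem_insert.mp h with h | h
      · exact hab h.symm
      · exact (Finset.mem_erase.mp (Finset.mem_erase.mp (hT.1 h)).2).1 rfl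
    exact ⟨⟨Finset.subset_univ _, by rw [Finset.card_insert_of_notMem haT, hT.2]⟩,
      Finset.mem_insert_self a T, hbT⟩
  · intro S hS
    rw [Finset.mem_filter] at hS
    exact Finset.insert_erase hS.2.1
  · intro T hT
    rw [Finset.mem_powersetCard] at hT
    exact Finset.erase_insert (fun h => (Finset.mem_erase.mp (hT.1 h)).1 rfl)

lemma sum_lend_card (n : ℕ) (hn : 3 ≤ n) (i : ℕ) :
    ∑ S ∈ Finset.powersetCard (i + 1) (Finset.univ : Finset (Fin n)), (LEnd n S).card
      = (n - 1).choose i + (n - 1) * ((n - 2).choose i) := by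
  classical
  have hL : ∀ S : Finset (Fin n), LEnd n S
      = Finset.univ.filter (fun v => v ∈ S ∧ ∀ w : Fin n, (w : ℕ) + 1 = (v : ℕ) → w ∉ S) := by
    intro S
    ext v
    simp only [LEnd, Finset.mem_filter, Finset.mem_univ, true_and]
  have step1 : ∑ S ∈ Finset.powersetCard (i + 1) (Finset.univ : Finset (Fin n)),
      (LEnd n S).card
      = ∑ v : Fin n, ((Finset.powersetCard (i + 1) (Finset.univ : Finset (Fin n))).filter
          (fun S => v ∈ S ∧ ∀ w : Fin n, (w : ℕ) + 1 = (v : ℕ) → w ∉ S)).card := by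
    simp only [hL, Finset.card_filter]
    rw [Finset.sum_comm]
  rw [step1]
  have hcount : ∀ v : Fin n,
      ((Finset.powersetCard (i + 1) (Finset.univ : Finset (Fin n))).filter
          (fun S => v ∈ S ∧ ∀ w : Fin n, (w : ℕ) + 1 = (v : ℕ) → w ∉ S)).card
      = if (v : ℕ) = 0 then (n - 1).choose i else (n - 2).choose i := by
    intro v
    by_cases hv : (v : ℕ) = 0
    · rw [if_pos hv]
      have : ((Finset.powersetCard (i + 1) (Finset.univ : Finset (Fin n))).filter
          (fun S => v ∈ S ∧ ∀ w : Fin n, (w : ℕ) + 1 = (v : ℕ) → w ∉ S))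
          = ((Finset.powersetCard (i + 1) (Finset.univ : Finset (Fin n))).filter
          (fun S => v ∈ S)) := by
        apply Finset.filter_congr
        intro S _
        constructor
        · exact fun h => h.1
        · exact fun h => ⟨h, fun w hw => by omega⟩
      rw [this, count_mem, Fintype.card_fin]
    · rw [if_neg hv]
      have hm : (v : ℕ) - 1 < n := by have := v.isLt; omega
      set b : Fin n := ⟨(v : ℕ) - 1, hm⟩ with hb
      have hvb : v ≠ b := by
        intro h
        have : (v : ℕ) = (v : ℕ) - 1 := congrArg Fin.val h
        omega
      have : ((Finset.powersetCard (i + 1) (Finset.univ : Finset (Fin n))).filter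
          (fun S => v ∈ S ∧ ∀ w : Fin n, (w : ℕ) + 1 = (v : ℕ) → w ∉ S))
          = ((Finset.powersetCard (i + 1) (Finset.univ : Finset (Fin n))).filter
          (fun S => v ∈ S ∧ b ∉ S)) := by
        apply Finset.filter_congr
        intro S _
        constructor
        · exact fun h => ⟨h.1, h.2 b (by simp [hb]; omega)⟩
        · refine fun h => ⟨h.1, fun w hw => ?_⟩
          have : w = b := Fin.ext (by simp [hb]; omega)
          rw [this]; exact h.2
      rw [this, count_mem_notmem v b hvb, Fintype.card_fin]
  simp only [hcount]
  rw [Finset.sum_ite, Finset.sum_const, Finset.sum_const, smul_eq_mul, smul_eq_mul]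
  have hone : (Finset.univ.filter (fun v : Fin n => (v : ℕ) = 0)).card = 1 := by
    rw [Finset.card_eq_one]
    refine ⟨⟨0, by omega⟩, ?_⟩
    ext v
    simp only [Finset.mem_filter, Finset.mem_univ, true_and, Finset.mem_singleton]
    constructor
    · intro h; exact Fin.ext h
    · intro h; rw [h]
  have htot := Finset.card_filter_add_card_filter_not
    (s := (Finset.univ : Finset (Fin n))) (p := fun v : Fin n => (v : ℕ) = 0)
  rw [Finset.card_univ, Fintype.card_fin] at htot
  rw [hone] at htot ⊢
  have : (Finset.univ.filter (fun v : Fin n => ¬ (v : ℕ) = 0)).card = n - 1 := by omega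
  rw [this]
  ring

/-- For the path graph `P_n` on `n ≥ 3` vertices, the invariant
`ρ(P_n) = Σ_{i=1}^{n-1} (-1)^i Σ_{|S| = i} H₀(P_n[S])` equals `(-1)^(n-1)`. -/
theorem rho_pathGraph (n : ℕ) (hn : 3 ≤ n) :
    ∑ i ∈ Finset.Icc 1 (n - 1), (-1 : ℤ) ^ i *
      ∑ S ∈ Finset.powersetCard i (Finset.univ : Finset (Fin n)),
        (H0 (SimpleGraph.pathGraph n) (↑S : Set (Fin n)) : ℤ)
    = (-1 : ℤ) ^ (n - 1) := by
  obtain ⟨m, rfl⟩ : ∃ m, n = m + 3 := ⟨n - 3, by omega⟩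
  have hIcc : Finset.Icc 1 (m + 3 - 1) = Finset.Ico 1 (m + 3) := by
    rw [show m + 3 - 1 = m + 2 from rfl, ← Finset.Ico_add_one_right_eq_Icc]; rfl
  rw [hIcc, Finset.sum_Ico_eq_sum_range]
  have hinner : ∀ j : ℕ,
      ∑ S ∈ Finset.powersetCard (1 + j) (Finset.univ : Finset (Fin (m + 3))),
        (H0 (SimpleGraph.pathGraph (m + 3)) (↑S : Set (Fin (m + 3))) : ℤ)
      = ((m + 2).choose j : ℤ) + (m + 2) * ((m + 1).choose j : ℤ) := by
    intro j
    have : ∀ S ∈ Finset.powersetCard (1 + j) (Finset.univ : Finset (Fin (m + 3))),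
        (H0 (SimpleGraph.pathGraph (m + 3)) (↑S : Set (Fin (m + 3))) : ℤ)
        = ((LEnd (m + 3) S).card : ℤ) := fun S _ => by rw [H0_eq_card_lend]
    rw [Finset.sum_congr rfl this, ← Nat.cast_sum, add_comm 1 j,
      sum_lend_card (m + 3) (by omega) j]
    push_cast
    ring
  have hterm : ∀ j ∈ Finset.range (m + 3 - 1),
      (-1 : ℤ) ^ (1 + j) *
        ∑ S ∈ Finset.powersetCard (1 + j) (Finset.univ : Finset (Fin (m + 3))),
          (H0 (SimpleGraph.pathGraph (m + 3)) (↑S : Set (Fin (m + 3))) : ℤ)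
      = -((-1 : ℤ) ^ j * ((m + 2).choose j : ℤ))
        - (m + 2) * ((-1 : ℤ) ^ j * ((m + 1).choose j : ℤ)) := by
    intro j _
    rw [hinner j, pow_add]
    ring
  rw [Finset.sum_congr rfl hterm, Finset.sum_sub_distrib, Finset.sum_neg_distrib,
    ← Finset.mul_sum]
  have h1 : ∑ j ∈ Finset.range (m + 3 - 1), (-1 : ℤ) ^ j * ((m + 2).choose j : ℤ)
      = -(-1 : ℤ) ^ (m + 2) := by
    have h0 := Int.alternating_sum_range_choose_of_ne (n := m + 2) (by omega)
    rw [Finset.sum_range_succ] at h0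
    rw [show m + 3 - 1 = m + 2 from rfl]
    simp only [Nat.choose_self, Nat.cast_one, mul_one] at h0
    linarith
  have h2 : ∑ j ∈ Finset.range (m + 3 - 1), (-1 : ℤ) ^ j * ((m + 1).choose j : ℤ)
      = 0 := by
    rw [show m + 3 - 1 = (m + 1) + 1 from rfl]
    exact Int.alternating_sum_range_choose_of_ne (by omega)
  rw [h1, h2]
  ring_nf
  rw [show 3 + m - 1 = m + 2 by omega, pow_add]
  norm_num
end

section
/- Let n ≥ 3 and let C_n be the cycle graph on vertex set {0,…,n−1} (i adjacent to j iff j ≡ i ± 1 mod n). Then ρ(C_n) := Σ_{i=1}^{n−1} (−1)^i Σ_{S ⊆ {0,…,n−1}, |S| = i} H₀(C_n[S]) = 0. -/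
open Finset SimpleGraph
open Fin.NatCast Fin.CommRing

lemma H0_eq (m : ℕ) (S : Finset (Fin (m+3))) (hS : S ≠ Finset.univ) :
    H0 (SimpleGraph.cycleGraph (m+3)) (↑S : Set (Fin (m+3)))
      = (S.filter (fun v => v + 1 ∉ S)).card := by
  classical
  obtain ⟨w, hw⟩ : ∃ w, w ∉ S := by
    by_contra h
    push_neg at h
    exact hS (Finset.eq_univ_iff_forall.mpr h)
  -- existence of a "gap" after every vertex
  have hex : ∀ v : Fin (m+3), ∃ k : ℕ, (v + ((k+1 : ℕ) : Fin (m+3))) ∉ S := by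
    intro v
    by_cases hv : w = v
    · refine ⟨m + 2, ?_⟩
      have : ((m + 2 + 1 : ℕ) : Fin (m+3)) = 0 := by
        simpa using (Fin.natCast_self (m+3))
      rw [this, add_zero, ← hv]; exact hw
    · refine ⟨(w - v).val - 1, ?_⟩
      have hne : (w - v) ≠ 0 := sub_ne_zero.mpr hv
      have hpos : 0 < (w - v).val := Fin.pos_iff_ne_zero.mpr hne
      have : ((w - v).val - 1 + 1 : ℕ) = (w - v).val := by omega
      rw [this, Fin.cast_val_eq_self]
      simpa using hw
  set K : Fin (m+3) → ℕ := fun v => Nat.find (hex v) with hK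
  set f : Fin (m+3) → Fin (m+3) := fun v => v + ((K v : ℕ) : Fin (m+3)) with hf
  have hfP : ∀ v, (v + ((K v + 1 : ℕ) : Fin (m+3))) ∉ S := fun v => Nat.find_spec (hex v)
  have hmem : ∀ v, v ∈ S → ∀ j, j ≤ K v → v + ((j : ℕ) : Fin (m+3)) ∈ S := by
    intro v hv j hj
    match j with
    | 0 => simpa using hv
    | t+1 =>
      have := Nat.find_min (hex v) (show t < K v by omega)
      simpa using this
  set G := SimpleGraph.cycleGraph (m+3) with hG
  set Gi := G.induce (↑S : Set (Fin (m+3))) with hGi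
  have hadjG : ∀ a : Fin (m+3), G.Adj a (a + 1) := by
    intro a
    rw [hG, SimpleGraph.cycleGraph_adj]
    right; ring
  have hstep : ∀ (a : Fin (m+3)) (ha : a ∈ S) (hb : a + 1 ∈ S),
      Gi.Adj ⟨a, Finset.mem_coe.mpr ha⟩ ⟨a + 1, Finset.mem_coe.mpr hb⟩ := by
    intro a ha hb
    exact hadjG a
  have hreach : ∀ (v : Fin (m+3)) (hv : v ∈ S) (j : ℕ) (hj : j ≤ K v),
      Gi.Reachable ⟨v, Finset.mem_coe.mpr hv⟩
        ⟨v + ((j : ℕ) : Fin (m+3)), Finset.mem_coe.mpr (hmem v hv j hj)⟩ := by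
    intro v hv j hj
    induction j with
    | zero =>
      have h : (⟨v + ((0:ℕ):Fin (m+3)), Finset.mem_coe.mpr (hmem v hv 0 hj)⟩ :
          (↑S : Set (Fin (m+3)))) = ⟨v, Finset.mem_coe.mpr hv⟩ := Subtype.ext (by simp)
      rw [h]
    | succ t ih =>
      have ht : t ≤ K v := by omega
      have h1 : v + ((t:ℕ) : Fin (m+3)) ∈ S := hmem v hv t ht
      have h2 : v + ((t:ℕ) : Fin (m+3)) + 1 ∈ S := by
        have : v + ((t:ℕ) : Fin (m+3)) + 1 = v + (((t+1:ℕ)) : Fin (m+3)) := by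
          push_cast; ring
        rw [this]; exact hmem v hv (t+1) hj
      refine (ih ht).trans ?_
      have := (hstep _ h1 h2).reachable
      have heq : v + ((t:ℕ) : Fin (m+3)) + 1 = v + (((t+1:ℕ)) : Fin (m+3)) := by
        push_cast; ring
      convert this using 2
      exact heq.symm
  -- f constant on edges
  have hkey : ∀ c : Fin (m+3), c ∈ S → c + 1 ∈ S → f c = f (c + 1) := by
    intro c hc hc1
    have h0 : 0 < K c := by
      rcases Nat.eq_zero_or_pos (K c) with h | h
      · exfalso
        have := hfP c
        rw [h] at this
        norm_num at this
        exact this hc1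
      · exact h
    have hKeq : K c = K (c+1) + 1 := by
      have le1 : K c ≤ K (c+1) + 1 := by
        apply Nat.find_le
        have := hfP (c+1)
        have heq : (c+1) + ((K (c+1) + 1 : ℕ) : Fin (m+3))
            = c + ((K (c+1) + 1 + 1 : ℕ) : Fin (m+3)) := by push_cast; ring
        rw [heq] at this
        exact this
      have le2 : K (c+1) + 1 ≤ K c := by
        have : K (c+1) ≤ K c - 1 := by
          apply Nat.find_le
          have := hfP c
          have heq : c + ((K c + 1 : ℕ) : Fin (m+3))
              = (c+1) + ((K c - 1 + 1 : ℕ) : Fin (m+3)) := by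
            have : (K c - 1 + 1 : ℕ) = K c := by omega
            rw [this]; push_cast; ring
          rw [heq] at this
          exact this
        omega
      omega
    show c + ((K c : ℕ) : Fin (m+3)) = (c+1) + ((K (c+1) : ℕ) : Fin (m+3))
    rw [hKeq]
    push_cast
    ring
  have hadjf : ∀ a b : Fin (m+3), a ∈ S → b ∈ S → G.Adj a b → f a = f b := by
    intro a b ha hb hab
    rw [hG, SimpleGraph.cycleGraph_adj] at hab
    rcases hab with h | h
    · have : a = b + 1 := by
        have := sub_eq_iff_eq_add.mp h
        rw [this]; ring
      rw [this] at ha ⊢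
      exact (hkey b hb ha).symm
    · have : b = a + 1 := by
        have := sub_eq_iff_eq_add.mp h
        rw [this]; ring
      rw [this] at hb ⊢
      exact hkey a ha hb
  have hwalk : ∀ (a b : (↑S : Set (Fin (m+3)))) (p : Gi.Walk a b), f ↑a = f ↑b := by
    intro a b p
    induction p with
    | nil => rfl
    | cons h _ ih =>
      refine Eq.trans ?_ ih
      exact hadjf _ _ (by exact_mod_cast (Subtype.mem _)) (by exact_mod_cast (Subtype.mem _)) h
  set B := S.filter (fun v => v + 1 ∉ S) with hB
  have hfB : ∀ v : Fin (m+3), v ∈ S → f v ∈ B := by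
    intro v hv
    rw [hB, Finset.mem_filter]
    constructor
    · exact hmem v hv (K v) le_rfl
    · have heq : f v + 1 = v + ((K v + 1 : ℕ) : Fin (m+3)) := by
        rw [hf]; push_cast; ring
      rw [heq]
      exact hfP v
  have hfid : ∀ b : Fin (m+3), b ∈ B → f b = b := by
    intro b hb
    rw [hB, Finset.mem_filter] at hb
    have hK0 : K b = 0 := by
      rw [show K b = Nat.find (hex b) from rfl, Nat.find_eq_zero]
      simpa using hb.2
    rw [hf]
    simp [hK0]
  -- equivalence
  let F : Gi.ConnectedComponent → {x // x ∈ B} :=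
    SimpleGraph.ConnectedComponent.lift
      (fun x => ⟨f ↑x, hfB ↑x (Finset.mem_coe.mp x.2)⟩)
      (fun v w p _ => Subtype.ext (hwalk v w p))
  have e : Gi.ConnectedComponent ≃ {x // x ∈ B} := by
    refine ⟨F, fun b => Gi.connectedComponentMk
      ⟨↑b, Finset.mem_coe.mpr (Finset.mem_of_mem_filter _ b.2)⟩, ?_, ?_⟩
    · intro c
      induction c using SimpleGraph.ConnectedComponent.ind with
      | _ x =>
        obtain ⟨v, hv⟩ := x
        apply SimpleGraph.ConnectedComponent.sound
        exact (hreach v (Finset.mem_coe.mp hv) (K v) le_rfl).symm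
    · intro b
      apply Subtype.ext
      exact hfid ↑b b.2
  rw [H0]
  rw [Nat.card_congr e]
  simp [Nat.card_eq_fintype_card]

lemma count_boundary (m i : ℕ) (v : Fin (m+3)) (hi1 : 1 ≤ i) :
    ((Finset.powersetCard i (Finset.univ : Finset (Fin (m+3)))).filter
        (fun S => v ∈ S ∧ v + 1 ∉ S)).card = (m+1).choose (i-1) := by
  classical
  have hv1 : v ≠ v + 1 := by
    intro h
    have h' : (0 : Fin (m+3)) = 1 := by
      have hv : v + 0 = v + 1 := by simpa using h
      exact add_left_cancel hv
    exact absurd (congrArg Fin.val h') (by simp [Fin.val_one])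
  have hcard : (((Finset.univ : Finset (Fin (m+3))).erase (v+1)).erase v).card = m + 1 := by
    rw [Finset.card_erase_of_mem, Finset.card_erase_of_mem] <;>
      simp [Finset.mem_erase, hv1, Fintype.card_fin]
  rw [← hcard, ← Finset.card_powersetCard]
  apply Finset.card_bij' (fun S _ => S.erase v) (fun T _ => insert v T)
  · intro S hS
    simp only [Finset.mem_filter] at hS
    exact Finset.insert_erase hS.2.1
  · intro T hT
    rw [Finset.mem_powersetCard] at hT
    have hvT : v ∉ T := fun h => by
      have := hT.1 h; simp [Finset.mem_erase] at this
    exact Finset.erase_insert hvT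

  · intro S hS
    simp only [Finset.mem_filter, Finset.mem_powersetCard_univ] at hS
    rw [Finset.mem_powersetCard]
    constructor
    · intro x hx
      simp only [Finset.mem_erase] at hx ⊢
      refine ⟨hx.1, ?_, Finset.mem_univ x⟩
      intro h; rw [h] at hx; exact hS.2.2 hx.2
    · rw [Finset.card_erase_of_mem hS.2.1, hS.1]
  · intro T hT
    rw [Finset.mem_powersetCard] at hT
    simp only [Finset.mem_filter, Finset.mem_powersetCard_univ]
    have hvT : v ∉ T := fun h => by
      have := hT.1 h; simp [Finset.mem_erase] at this
    refine ⟨?_, Finset.mem_insert_self _ _, ?_⟩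
    · rw [Finset.card_insert_of_notMem hvT, hT.2]; omega
    · intro h
      rcases Finset.mem_insert.mp h with h | h
      · exact hv1 h.symm
      · have := hT.1 h; simp [Finset.mem_erase] at this
lemma sum_H0 (m i : ℕ) (hi1 : 1 ≤ i) (hi2 : i ≤ m + 2) :
    ∑ S ∈ Finset.powersetCard i (Finset.univ : Finset (Fin (m+3))),
        (H0 (SimpleGraph.cycleGraph (m+3)) (↑S : Set (Fin (m+3))) : ℤ)
      = (m+3) * (m+1).choose (i-1) := by
  classical
  have step1 : ∀ S ∈ Finset.powersetCard i (Finset.univ : Finset (Fin (m+3))),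
      (H0 (SimpleGraph.cycleGraph (m+3)) (↑S : Set (Fin (m+3))) : ℤ)
        = ∑ v : Fin (m+3), (if v ∈ S ∧ v + 1 ∉ S then (1:ℤ) else 0) := by
    intro S hS
    rw [Finset.mem_powersetCard_univ] at hS
    have hSne : S ≠ Finset.univ := by
      intro h
      rw [h, Finset.card_univ, Fintype.card_fin] at hS
      omega
    rw [H0_eq m S hSne]
    have hfe : S.filter (fun v => v + 1 ∉ S)
        = Finset.univ.filter (fun v => v ∈ S ∧ v + 1 ∉ S) := by
      ext x; simp [and_comm]
    rw [hfe, Finset.card_filter]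
    push_cast
    exact Finset.sum_congr rfl fun x _ => by split <;> simp
  rw [Finset.sum_congr rfl step1, Finset.sum_comm]
  have step2 : ∀ v : Fin (m+3),
      ∑ S ∈ Finset.powersetCard i (Finset.univ : Finset (Fin (m+3))),
          (if v ∈ S ∧ v + 1 ∉ S then (1:ℤ) else 0)
        = ((m+1).choose (i-1) : ℤ) := by
    intro v
    rw [Finset.sum_boole]
    exact_mod_cast congrArg (Nat.cast (R := ℤ)) (count_boundary m i v hi1)
  rw [Finset.sum_congr rfl fun v _ => step2 v]
  simp [Finset.card_univ, mul_comm]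

/-- For the cycle graph `C_n` on `n ≥ 3` vertices, the invariant
`ρ(C_n) = Σ_{i=1}^{n-1} (-1)^i Σ_{|S| = i} H₀(C_n[S])` vanishes. -/
theorem rho_cycleGraph (n : ℕ) (hn : 3 ≤ n) :
    ∑ i ∈ Finset.Icc 1 (n - 1), (-1 : ℤ) ^ i *
      ∑ S ∈ Finset.powersetCard i (Finset.univ : Finset (Fin n)),
        (H0 (SimpleGraph.cycleGraph n) (↑S : Set (Fin n)) : ℤ)
    = 0 := by
  obtain ⟨m, rfl⟩ : ∃ m, n = m + 3 := ⟨n - 3, by omega⟩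
  have h1 : ∀ i ∈ Finset.Icc 1 (m + 3 - 1),
      (-1 : ℤ) ^ i * ∑ S ∈ Finset.powersetCard i (Finset.univ : Finset (Fin (m+3))),
          (H0 (SimpleGraph.cycleGraph (m+3)) (↑S : Set (Fin (m+3))) : ℤ)
        = (-1 : ℤ) ^ i * ((m+3) * (m+1).choose (i-1)) := by
    intro i hi
    rw [Finset.mem_Icc] at hi
    rw [sum_H0 m i hi.1 (by omega)]
  rw [Finset.sum_congr rfl h1]
  have hmain : ∑ i ∈ Finset.Icc 1 (m + 3 - 1),
      (-1 : ℤ) ^ i * ((m+3) * (m+1).choose (i-1))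
      = ∑ j ∈ Finset.range (m + 2),
        ((m+3) : ℤ) * (-((-1 : ℤ) ^ j * (m+1).choose j)) := by
    refine Finset.sum_bij' (fun a _ => a - 1) (fun b _ => b + 1) ?_ ?_ ?_ ?_ ?_
    · intro a ha
      rw [Finset.mem_Icc] at ha
      show a - 1 ∈ Finset.range (m + 2)
      rw [Finset.mem_range]
      omega
    · intro b hb
      rw [Finset.mem_range] at hb
      show b + 1 ∈ Finset.Icc 1 (m + 3 - 1)
      rw [Finset.mem_Icc]
      omega
    · intro a ha
      rw [Finset.mem_Icc] at ha
      show a - 1 + 1 = a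
      omega
    · intro b _
      show b + 1 - 1 = b
      omega
    · intro a ha
      rw [Finset.mem_Icc] at ha
      obtain ⟨k, rfl⟩ : ∃ k, a = k + 1 := ⟨a - 1, by omega⟩
      simp only [Nat.add_sub_cancel, pow_succ]
      ring
  rw [hmain, ← Finset.mul_sum, Finset.sum_neg_distrib,
    show m + 2 = (m + 1) + 1 from rfl, Int.alternating_sum_range_choose]
  simp
end

section
/- Let n ≥ 3 and let C_n be the cycle graph on vertex set Fin n. Define J : Finset (Fin n) → ℤ by J(S) = H₀(C_n[S]) (the number of connected components of the induced subgraph) when S is a proper subset of the full vertex set, and J(univ) = 2. Then the alternating sum over all nonempty subsets satisfies Σ_{S ⊆ Fin n, S ≠ ∅} (−1)^{|S|−1} J(S) = 2·(−1)^{n−1}. (This is the connectivity count C^N of a simple annular collection of N = n subsystems: each proper union of consecutive subsystems is a disjoint union of arcs with one boundary component per arc, while the full annulus has two boundary components.) -/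
/-- The boundary-component count `J` for an annular collection of `n` subsystems:
for a proper subset `S` of the cycle `C_n` it is the number of connected components
of the induced subgraph (one boundary per arc), while the full annulus has two
boundary components. -/
noncomputable def Jcount (n : ℕ) (S : Finset (Fin n)) : ℤ :=
  if S = (Finset.univ : Finset (Fin n)) then 2
  else (H0 (SimpleGraph.cycleGraph n) (↑S : Set (Fin n)) : ℤ)
open Fin.NatCast Fin.CommRing in
open Finset in
lemma H0_proper (m : ℕ) (S : Finset (Fin (m + 3))) (hS : S ≠ Finset.univ) :
    H0 (SimpleGraph.cycleGraph (m + 3)) (↑S : Set (Fin (m + 3)))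
      = (S.filter (fun i => i + 1 ∉ S)).card := by
  set G := SimpleGraph.cycleGraph (m + 3) with hG
  obtain ⟨z, hz⟩ : ∃ z, z ∉ S := by
    by_contra h
    push_neg at h
    exact hS (Finset.eq_univ_iff_forall.mpr h)
  have hex : ∀ v : Fin (m + 3), ∃ t : ℕ, v + (t : Fin (m + 3)) + 1 ∉ S := by
    intro v
    refine ⟨(z - v - 1).val, ?_⟩
    rw [Fin.cast_val_eq_self]
    have : v + (z - v - 1) + 1 = z := by ring
    rwa [this]
  set d : Fin (m + 3) → ℕ := fun v => Nat.find (hex v) with hd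
  set g : Fin (m + 3) → Fin (m + 3) := fun v => v + ((d v : ℕ) : Fin (m + 3)) with hg
  have hgap : ∀ v, g v + 1 ∉ S := fun v => Nat.find_spec (hex v)
  have hmin : ∀ v (k : ℕ), k < d v → v + (k : Fin (m + 3)) + 1 ∈ S := by
    intro v k hk
    have := Nat.find_min (hex v) hk
    simpa using this
  have chain : ∀ (v : Fin (m + 3)), v ∈ S → ∀ (t : ℕ), t ≤ d v → v + (t : Fin (m + 3)) ∈ S := by
    intro v hv t
    induction t with
    | zero => intro _; simpa using hv
    | succ t ih =>
      intro ht
      have h1 : v + (t : Fin (m + 3)) + 1 ∈ S := hmin v t (by omega)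
      have he : ((t + 1 : ℕ) : Fin (m + 3)) = (t : Fin (m + 3)) + 1 := by push_cast; ring
      rw [he, ← add_assoc]
      exact h1
  have hgmem : ∀ v, v ∈ S → g v ∈ S := fun v hv => chain v hv (d v) le_rfl
  have hgfix : ∀ v, v + 1 ∉ S → g v = v := by
    intro v hv1
    have h0 : d v = 0 := by
      rw [hd, Nat.find_eq_zero]
      simpa using hv1
    simp [hg, h0]
  have hdsucc : ∀ v : Fin (m + 3), v + 1 ∈ S → d v = d (v + 1) + 1 := by
    intro v hv1
    rw [hd, Nat.find_eq_iff]
    constructor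
    · have hs := Nat.find_spec (hex (v + 1))
      have he : v + ((d (v + 1) + 1 : ℕ) : Fin (m + 3)) + 1
          = (v + 1) + ((d (v + 1) : ℕ) : Fin (m + 3)) + 1 := by push_cast; ring
      rwa [he]
    · intro k hk
      simp only [not_not]
      match k with
      | 0 => simpa using hv1
      | (j + 1) =>
        have hk' : j + 1 < d (v + 1) + 1 := hk
        have hj : j < d (v + 1) := by omega
        have hmem := hmin (v + 1) j hj
        have he : v + ((j + 1 : ℕ) : Fin (m + 3)) + 1
            = (v + 1) + ((j : ℕ) : Fin (m + 3)) + 1 := by push_cast; ring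
        rwa [he]
  have hgsucc : ∀ v : Fin (m + 3), v + 1 ∈ S → g v = g (v + 1) := by
    intro v hv1
    simp only [hg, hdsucc v hv1]
    push_cast
    ring
  have hgadj : ∀ u w : Fin (m + 3), u ∈ S → w ∈ S → G.Adj u w → g u = g w := by
    intro u w hu hw huw
    rw [hG, SimpleGraph.cycleGraph_adj] at huw
    rcases huw with h | h
    · have : u = w + 1 := by
        have := sub_eq_iff_eq_add.mp h; linear_combination this
      subst this
      exact (hgsucc w (by assumption)).symm
    · have : w = u + 1 := by
        have := sub_eq_iff_eq_add.mp h; linear_combination this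
      subst this
      exact hgsucc u (by assumption)
  have reach : ∀ (k : ℕ) (v : Fin (m + 3)) (hv : v ∈ S), d v = k →
      (G.induce (↑S : Set (Fin (m + 3)))).Reachable
        ⟨v, Finset.mem_coe.mpr hv⟩ ⟨g v, Finset.mem_coe.mpr (hgmem v hv)⟩ := by
    intro k
    induction k with
    | zero =>
      intro v hv hdv
      have : g v = v := by simp [hg, hdv]
      have he : (⟨g v, Finset.mem_coe.mpr (hgmem v hv)⟩ :
          (↑S : Set (Fin (m + 3)))) = ⟨v, Finset.mem_coe.mpr hv⟩ := Subtype.ext this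
      rw [he]
    | succ k ih =>
      intro v hv hdv
      have h1 : v + 1 ∈ S := by
        have := hmin v 0 (by omega)
        simpa using this
      have hd1 : d (v + 1) = k := by
        have := hdsucc v h1
        omega
      have hadj : (G.induce (↑S : Set (Fin (m + 3)))).Adj
          ⟨v, Finset.mem_coe.mpr hv⟩ ⟨v + 1, Finset.mem_coe.mpr h1⟩ := by
        show G.Adj v (v + 1)
        rw [hG, SimpleGraph.cycleGraph_adj]
        right
        ring
      have hgv : g v = g (v + 1) := hgsucc v h1
      have he : (⟨g v, Finset.mem_coe.mpr (hgmem v hv)⟩ :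
          (↑S : Set (Fin (m + 3)))) = ⟨g (v + 1), Finset.mem_coe.mpr (hgmem _ h1)⟩ :=
        Subtype.ext hgv
      rw [he]
      exact hadj.reachable.trans (ih (v + 1) h1 hd1)
  set fval : (↑S : Set (Fin (m + 3))) → {y // y ∈ S.filter (fun i => i + 1 ∉ S)} :=
    fun x => ⟨g x.1, Finset.mem_filter.mpr
      ⟨hgmem x.1 (Finset.mem_coe.mp x.2), hgap x.1⟩⟩ with hfval
  have key : ∀ (x y : (↑S : Set (Fin (m + 3))))
      (p : (G.induce (↑S : Set (Fin (m + 3)))).Walk x y), fval x = fval y := by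
    intro x y p
    induction p with
    | nil => rfl
    | cons h q ih =>
      rename_i a b c
      refine Eq.trans ?_ ih
      exact Subtype.ext (hgadj a.1 b.1 (Finset.mem_coe.mp a.2) (Finset.mem_coe.mp b.2) h)
  have equiv : (G.induce (↑S : Set (Fin (m + 3)))).ConnectedComponent ≃
      {y // y ∈ S.filter (fun i => i + 1 ∉ S)} := by
    refine
      { toFun := SimpleGraph.ConnectedComponent.lift fval (fun x y p _ => key x y p)
        invFun := fun e => (G.induce (↑S : Set (Fin (m + 3)))).connectedComponentMk
          ⟨e.1, Finset.mem_coe.mpr (Finset.mem_filter.mp e.2).1⟩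
        left_inv := ?_
        right_inv := ?_ }
    · refine SimpleGraph.ConnectedComponent.ind ?_
      intro x
      obtain ⟨v, hv⟩ := x
      simp only [SimpleGraph.ConnectedComponent.lift_mk, hfval]
      exact SimpleGraph.ConnectedComponent.sound
        (reach (d v) v (Finset.mem_coe.mp hv) rfl).symm
    · intro e
      obtain ⟨y, hy⟩ := e
      obtain ⟨hy1, hy2⟩ := Finset.mem_filter.mp hy
      simp only [SimpleGraph.ConnectedComponent.lift_mk, hfval]
      exact Subtype.ext (hgfix y hy2)
  rw [H0, Nat.card_congr equiv, Nat.card_eq_fintype_card, Fintype.card_coe]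


open Finset in
lemma sum_part (m : ℕ) (J : Finset (Fin (m + 3)) → ℤ)
    (hJuniv : J Finset.univ = 2)
    (hJ : ∀ S : Finset (Fin (m + 3)), S ≠ Finset.univ →
      J S = ((S.filter (fun i => i + 1 ∉ S)).card : ℤ)) :
    ∑ S ∈ (Finset.univ : Finset (Fin (m + 3))).powerset.filter (· ≠ ∅),
      (-1 : ℤ) ^ (S.card - 1) * J S
    = 2 * (-1 : ℤ) ^ (m + 3 - 1) := by
  set P := (Finset.univ : Finset (Fin (m + 3))).powerset.filter (· ≠ ∅) with hP
  have huP : (Finset.univ : Finset (Fin (m + 3))) ∈ P := by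
    refine Finset.mem_filter.mpr ⟨Finset.mem_powerset_self _, ?_⟩
    exact Finset.univ_nonempty.ne_empty
  rw [← Finset.sum_erase_add _ _ huP]
  have hcard : (Finset.univ : Finset (Fin (m + 3))).card = m + 3 := by simp
  rw [hJuniv, hcard]
  have key : ∑ S ∈ P.erase Finset.univ, (-1 : ℤ) ^ (S.card - 1) * J S = 0 := by
    have h1 : ∀ S ∈ P.erase Finset.univ,
        (-1 : ℤ) ^ (S.card - 1) * J S
        = (-1 : ℤ) ^ (S.card - 1) * ((S.filter (fun i => i + 1 ∉ S)).card : ℤ) := by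
      intro S hS
      rw [hJ S (Finset.ne_of_mem_erase hS)]
    rw [Finset.sum_congr rfl h1]
    have h2 : ∑ S ∈ P.erase Finset.univ,
        (-1 : ℤ) ^ (S.card - 1) * ((S.filter (fun i => i + 1 ∉ S)).card : ℤ)
        = ∑ S ∈ (Finset.univ : Finset (Fin (m + 3))).powerset,
        (-1 : ℤ) ^ (S.card - 1) * ((S.filter (fun i => i + 1 ∉ S)).card : ℤ) := by
      refine Finset.sum_subset ?_ ?_
      · intro S hS
        simp [hP] at hS ⊢
      · intro S hS hS'
        have hcases : S = ∅ ∨ S = Finset.univ := by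
          by_contra h
          push_neg at h
          exact hS' (by simp [hP, Finset.mem_erase, h.1.ne_empty, h.2])
        rcases hcases with rfl | rfl
        · simp
        · have he : (Finset.univ.filter (fun i : Fin (m + 3) => i + 1 ∉ Finset.univ)) = ∅ := by
            simp
          rw [he]
          simp
    rw [h2]
    have h3 : ∀ S : Finset (Fin (m + 3)),
        ((S.filter (fun i => i + 1 ∉ S)).card : ℤ)
        = ∑ i : Fin (m + 3), (if i ∈ S ∧ i + 1 ∉ S then (1 : ℤ) else 0) := by
      intro S
      have he : S.filter (fun i => i + 1 ∉ S)
          = Finset.univ.filter (fun i => i ∈ S ∧ i + 1 ∉ S) := by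
        ext x; simp
      rw [he, Finset.card_filter]
      push_cast
      rfl
    simp_rw [h3, Finset.mul_sum]
    rw [Finset.sum_comm]
    refine Finset.sum_eq_zero ?_
    intro i _
    simp_rw [mul_ite, mul_one, mul_zero]
    rw [← Finset.sum_filter]
    -- inner sum: bijection with powerset of A
    have hi1 : i + 1 ≠ i := by
      intro h
      have h1 : (1 : Fin (m + 3)) = 0 := by
        have := h
        nth_rewrite 2 [← add_zero i] at this
        exact add_left_cancel this
      simp [Fin.ext_iff] at h1
    set A := ((Finset.univ : Finset (Fin (m + 3))).erase i).erase (i + 1) with hA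
    have hiA : i ∉ A := fun h => (Finset.mem_erase.mp (Finset.mem_erase.mp h).2).1 rfl
    have hi1A : i + 1 ∉ A := fun h => (Finset.mem_erase.mp h).1 rfl
    have hsum : ∑ S ∈ (Finset.univ : Finset (Fin (m + 3))).powerset.filter
          (fun S => i ∈ S ∧ i + 1 ∉ S), (-1 : ℤ) ^ (S.card - 1)
        = ∑ T ∈ A.powerset, (-1 : ℤ) ^ T.card := by
      refine Finset.sum_nbij' (fun S => S.erase i) (fun T => insert i T) ?_ ?_ ?_ ?_ ?_
      · intro S hS
        have hS' := Finset.mem_filter.mp hS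
        have hS3 := hS'.2.2
        refine Finset.mem_powerset.mpr ?_
        intro x hx
        obtain ⟨hxi, hxS⟩ := Finset.mem_erase.mp hx
        refine Finset.mem_erase.mpr ⟨?_, Finset.mem_erase.mpr ⟨hxi, Finset.mem_univ x⟩⟩
        intro h
        exact hS3 (h ▸ hxS)
      · intro T hT
        have hT' := Finset.mem_powerset.mp hT
        refine Finset.mem_filter.mpr ⟨Finset.mem_powerset.mpr (Finset.subset_univ _),
          Finset.mem_insert_self i T, ?_⟩
        intro h
        rcases Finset.mem_insert.mp h with h | h
        · exact hi1 h
        · exact hi1A (hT' h)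
      · intro S hS
        have hiS : i ∈ S := (Finset.mem_filter.mp hS).2.1
        exact Finset.insert_erase hiS
      · intro T hT
        exact Finset.erase_insert (fun h => hiA (Finset.mem_powerset.mp hT h))
      · intro S hS
        have hiS : i ∈ S := (Finset.mem_filter.mp hS).2.1
        have : S.card = (S.erase i).card + 1 := by
          rw [Finset.card_erase_of_mem hiS]
          have := Finset.card_pos.mpr ⟨i, hiS⟩
          omega
        rw [this]
        simp
    rw [hsum]
    refine Finset.sum_powerset_neg_one_pow_card_of_nonempty ?_
    refine Finset.card_pos.mp ?_
    rw [hA, Finset.card_erase_of_mem, Finset.card_erase_of_mem (Finset.mem_univ i)]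
    · simp only [Finset.card_univ, Fintype.card_fin]
      omega
    · exact Finset.mem_erase.mpr ⟨hi1, Finset.mem_univ _⟩
  rw [key]
  ring

/-- The connectivity count `C^N` of a simple annular collection of `N = n ≥ 3`
subsystems: `Σ_{S ≠ ∅} (-1)^(|S|-1) J(S) = 2 (-1)^(n-1)`. -/
theorem connectivity_count_annular (n : ℕ) (hn : 3 ≤ n) :
    ∑ S ∈ (Finset.univ : Finset (Fin n)).powerset.filter (· ≠ ∅),
      (-1 : ℤ) ^ (S.card - 1) * Jcount n S
    = 2 * (-1 : ℤ) ^ (n - 1) := by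
  obtain ⟨m, rfl⟩ : ∃ m, n = m + 3 := ⟨n - 3, by omega⟩
  refine sum_part m (Jcount (m + 3)) ?_ ?_
  · simp [Jcount]
  · intro S hS
    rw [Jcount, if_neg hS, H0_proper m S hS]
end

section
/- Let n ≥ 3 and let P_n be the path graph on vertex set Fin n. Then Σ_{S ⊆ Fin n, S ≠ ∅} (−1)^{|S|−1} H₀(P_n[S]) = 0, where the sum is over all nonempty vertex subsets. (This is the vanishing of the connectivity count C^N, and hence of the N-partite information, for an open chain of N = n subsystems.) -/
open SimpleGraph Finset

variable {n : ℕ} {S : Finset (Fin n)}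

def startsF (S : Finset (Fin n)) : Finset (Fin n) :=
  S.filter (fun i => ∀ j ∈ S, (j : ℕ) + 1 ≠ (i : ℕ))

lemma walk_mem {u v : (↑S : Set (Fin n))}
    (w : ((pathGraph n).induce ↑S).Walk u v) : ∀ x : Fin n,
    min (u : Fin n).val (v : Fin n).val ≤ x.val →
    x.val ≤ max (u : Fin n).val (v : Fin n).val → x ∈ S := by
  induction w with
  | @nil a =>
    intro x h1 h2
    simp only [min_self, max_self] at h1 h2
    have : x = (a : Fin n) := Fin.ext (le_antisymm h2 h1)
    subst this
    exact a.2
  | @cons a b c h p ih =>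
    have hadj : ((a : Fin n) : ℕ) + 1 = ((b : Fin n) : ℕ) ∨
        ((b : Fin n) : ℕ) + 1 = ((a : Fin n) : ℕ) := by
      have := h
      simp only [comap_adj, Function.Embedding.coe_subtype, pathGraph_adj] at this
      exact this
    intro x h1 h2
    by_cases hx : x.val = (a : Fin n).val
    · have : x = (a : Fin n) := Fin.ext hx
      subst this; exact a.2
    · exact ih x (by omega) (by omega)

lemma reach_of_interval (d : ℕ) : ∀ (u v : Fin n) (hu : u ∈ S) (hv : v ∈ S),
    v.val = u.val + d →
    (∀ x : Fin n, u.val ≤ x.val → x.val ≤ v.val → x ∈ S) →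
    ((pathGraph n).induce (↑S : Set (Fin n))).Reachable ⟨u, hu⟩ ⟨v, hv⟩ := by
  induction d with
  | zero =>
    intro u v hu hv hd _
    have : u = v := Fin.ext (by omega)
    subst this
    rfl
  | succ d ih =>
    intro u v hu hv hd h
    have hlt : u.val + 1 < n := by omega
    set u' : Fin n := ⟨u.val + 1, by omega⟩ with hu'def
    have hu' : u' ∈ S := h u' (by simp [hu'def]) (by simp [hu'def]; omega)
    have hadj : ((pathGraph n).induce (↑S : Set (Fin n))).Adj ⟨u, hu⟩ ⟨u', hu'⟩ := by
      simp only [comap_adj, Function.Embedding.coe_subtype, pathGraph_adj]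
      simp [hu'def]
    exact (hadj.reachable).trans
      (ih u' v hu' hv (by simp [hu'def]; omega)
        (fun x hx1 hx2 => h x (by simp [hu'def] at hx1; omega) hx2))

lemma exists_start : ∀ (k : ℕ) (v : Fin n), v.val ≤ k → ∀ hv : v ∈ S,
    ∃ i, ∃ hi : i ∈ startsF S,
      ((pathGraph n).induce (↑S : Set (Fin n))).Reachable
        ⟨i, (Finset.mem_filter.mp hi).1⟩ ⟨v, hv⟩ := by
  intro k
  induction k with
  | zero =>
    intro v hvk hv
    refine ⟨v, Finset.mem_filter.mpr ⟨hv, fun j _ hj => by omega⟩, ?_⟩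
    rfl
  | succ k ih =>
    intro v hvk hv
    by_cases hs : v ∈ startsF S
    · exact ⟨v, hs, by rfl⟩
    · simp only [startsF, Finset.mem_filter, hv, true_and, not_forall] at hs
      obtain ⟨j, hj, hj1⟩ := hs
      push_neg at hj1
      obtain ⟨i, hi, hr⟩ := ih j (by omega) hj
      have hadj : ((pathGraph n).induce (↑S : Set (Fin n))).Adj ⟨j, hj⟩ ⟨v, hv⟩ := by
        simp only [comap_adj, Function.Embedding.coe_subtype, pathGraph_adj]
        omega
      exact ⟨i, hi, hr.trans hadj.reachable⟩

lemma H0_eq_card_starts (S : Finset (Fin n)) :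
    Nat.card ((pathGraph n).induce (↑S : Set (Fin n))).ConnectedComponent
      = (startsF S).card := by
  rw [← Nat.card_eq_finsetCard]
  refine (Nat.card_eq_of_bijective
    (fun i : ↥(startsF S) =>
      ((pathGraph n).induce (↑S : Set (Fin n))).connectedComponentMk
        ⟨i.1, (Finset.mem_filter.mp i.2).1⟩) ⟨?_, ?_⟩).symm
  · rintro ⟨i, hi⟩ ⟨j, hj⟩ hij
    have hr := SimpleGraph.ConnectedComponent.eq.mp hij
    obtain ⟨w⟩ := hr
    have hij' : i.val = j.val := by
      by_contra hne
      rcases Nat.lt_or_ge i.val j.val with hlt | hge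
      · have hj1 : j.val - 1 < n := by omega
        have := walk_mem w ⟨j.val - 1, hj1⟩ (by simp <;> omega) (by simp <;> omega)
        exact (Finset.mem_filter.mp hj).2 _ this (by simp <;> omega)
      · have hlt : j.val < i.val := by omega
        have hi1 : i.val - 1 < n := by omega
        have := walk_mem w ⟨i.val - 1, hi1⟩ (by simp <;> omega) (by simp <;> omega)
        exact (Finset.mem_filter.mp hi).2 _ this (by simp <;> omega)
    exact Subtype.ext (Fin.ext hij')
  · intro c
    obtain ⟨⟨v, hv⟩, hc⟩ := c.exists_rep
    obtain ⟨i, hi, hr⟩ := exists_start v.val v le_rfl hv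
    exact ⟨⟨i, hi⟩, by rw [← hc]; exact SimpleGraph.ConnectedComponent.eq.mpr hr⟩

set_option linter.unreachableTactic false
set_option linter.unusedTactic false
set_option linter.unnecessarySeqFocus false

/-- For an open chain of `N = n ≥ 3` subsystems (the path graph `P_n`), the
connectivity count `Σ_{S ≠ ∅} (-1)^(S.card-1) H₀(P_n[S])` vanishes. -/
theorem connectivity_count_open_chain (n : ℕ) (hn : 3 ≤ n) :
    ∑ S ∈ (Finset.univ : Finset (Fin n)).powerset.filter (· ≠ ∅),
      (-1 : ℤ) ^ (S.card - 1) * (H0 (SimpleGraph.pathGraph n) (↑S : Set (Fin n)) : ℤ)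
    = 0 := by
  have key : ∀ S : Finset (Fin n),
      (H0 (SimpleGraph.pathGraph n) (↑S : Set (Fin n)) : ℤ) = ((startsF S).card : ℤ) := by
    intro S
    rw [H0, H0_eq_card_starts]
  rw [Finset.sum_filter_of_ne (by
    intro S _ hS
    simp only [ne_eq]
    intro hSe
    subst hSe
    apply hS
    rw [key]
    simp [startsF])]
  have step1 : ∀ S : Finset (Fin n),
      (-1 : ℤ) ^ (S.card - 1) * (H0 (SimpleGraph.pathGraph n) (↑S : Set (Fin n)) : ℤ)
        = ∑ i : Fin n, if i ∈ startsF S then (-1 : ℤ) ^ (S.card - 1) else 0 := by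
    intro S
    rw [key, Finset.sum_ite_mem, Finset.univ_inter, Finset.sum_const, nsmul_eq_mul, mul_comm]
  rw [Finset.sum_congr rfl fun S _ => step1 S, Finset.sum_comm]
  refine Finset.sum_eq_zero fun i _ => ?_
  rw [← Finset.sum_filter]
  classical
  set D : Finset (Fin n) :=
    insert i (Finset.univ.filter fun j => (j : ℕ) + 1 = (i : ℕ)) with hD
  have hcard : ∀ T ∈ (Finset.univ \ D).powerset,
      (-1 : ℤ) ^ ((insert i T).card - 1) = (-1 : ℤ) ^ T.card := by
    intro T hT
    have hiT : i ∉ T := fun h => by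
      have := Finset.mem_powerset.mp hT h
      simp [hD] at this
    rw [Finset.card_insert_of_notMem hiT]
    simp
  have hbij : ∑ S ∈ Finset.univ.powerset.filter (fun S => i ∈ startsF S),
      (-1 : ℤ) ^ (S.card - 1) = ∑ T ∈ (Finset.univ \ D).powerset, (-1 : ℤ) ^ T.card := by
    refine Finset.sum_nbij' (fun S => S.erase i) (fun T => insert i T) ?_ ?_ ?_ ?_ ?_
    · intro S hS
      simp only [Finset.mem_filter, Finset.mem_powerset] at hS
      obtain ⟨-, hstart⟩ := hS
      rw [Finset.mem_powerset]
      intro j hj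
      rw [Finset.mem_erase] at hj
      have hjS := hj.2
      have hji := hj.1
      simp only [hD, Finset.mem_sdiff, Finset.mem_univ, true_and, Finset.mem_insert,
        Finset.mem_filter, not_or]
      exact ⟨hji, (Finset.mem_filter.mp hstart).2 j hjS⟩
    · intro T hT
      rw [Finset.mem_powerset] at hT
      simp only [Finset.mem_filter, Finset.mem_powerset]
      refine ⟨Finset.subset_univ _, Finset.mem_filter.mpr ⟨Finset.mem_insert_self _ _, ?_⟩⟩
      intro j hj
      rcases Finset.mem_insert.mp hj with h | h
      · subst h; omega
      · have := hT h
        simp only [hD, Finset.mem_sdiff, Finset.mem_univ, true_and, Finset.mem_insert,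
          Finset.mem_filter, not_or] at this
        exact this.2
    · intro S hS
      simp only [Finset.mem_filter] at hS
      exact Finset.insert_erase ((Finset.mem_filter.mp hS.2).1)
    · intro T hT
      apply Finset.erase_insert
      intro h
      have := Finset.mem_powerset.mp hT h
      simp [hD] at this
    · intro S hS
      simp only [Finset.mem_filter] at hS
      have hiS : i ∈ S := (Finset.mem_filter.mp hS.2).1
      rw [Finset.card_erase_of_mem hiS]
  rw [hbij]
  apply Finset.sum_powerset_neg_one_pow_card_of_nonempty
  rw [← Finset.card_pos, Finset.card_sdiff_of_subset (Finset.subset_univ _)]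
  have hDcard : D.card ≤ 2 := by
    have hf : (Finset.univ.filter fun j : Fin n => (j : ℕ) + 1 = (i : ℕ)).card ≤ 1 := by
      apply Finset.card_le_one.mpr
      intro a ha b hb
      simp only [Finset.mem_filter] at ha hb
      exact Fin.ext (by omega)
    have hle := Finset.card_insert_le i (Finset.univ.filter fun j : Fin n => (j : ℕ) + 1 = (i : ℕ))
    rw [← hD] at hle
    omega
  simp only [Finset.card_univ, Fintype.card_fin]
  omega
end

section
/- Let ι be a type, s a nonempty finite subset of ι, and a ∈ ι with a ∉ s. Let f : Finset ι → ℝ satisfy f(insert a Q) = f({a}) + f(Q) for every nonempty Q ⊆ s (additivity of the boundary count over the disjoint piece a). Then the alternating sum over all nonempty subsets of insert a s vanishes: Σ_{Q ⊆ insert a s, Q ≠ ∅} (−1)^{|Q|−1} f(Q) = 0. (A collection of subsystems consisting of an arbitrary structure together with a disjoint isolated subsystem has vanishing connectivity count C^N, hence vanishing N-partite information.) -/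
/-- A collection of subsystems consisting of an arbitrary structure `s` together
with a disjoint isolated subsystem `a` (so that the boundary count `f` is additive
over the disjoint piece `a`) has vanishing connectivity count:
`Σ_{Q ⊆ insert a s, Q ≠ ∅} (-1)^(|Q|-1) f(Q) = 0`. -/
theorem connectivity_count_isolated_island
    {ι : Type*} [DecidableEq ι] (s : Finset ι) (hs : s.Nonempty)
    (a : ι) (ha : a ∉ s) (f : Finset ι → ℝ)
    (hf : ∀ Q ⊆ s, Q.Nonempty → f (insert a Q) = f {a} + f Q) :
    ∑ Q ∈ (insert a s).powerset.filter (· ≠ ∅),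
      (-1 : ℝ) ^ (Q.card - 1) * f Q = 0 := by
  classical
  have hsplit : (insert a s).powerset.filter (· ≠ ∅) =
      (s.powerset.filter (· ≠ ∅)) ∪ (s.powerset.image (insert a)) := by
    ext Q
    simp only [Finset.mem_filter, Finset.mem_powerset, Finset.mem_union, Finset.mem_image]
    constructor
    · rintro ⟨hQ, hne⟩
      by_cases haQ : a ∈ Q
      · right
        refine ⟨Q.erase a, fun x hx => ?_, Finset.insert_erase haQ⟩
        rcases Finset.mem_insert.1 (hQ (Finset.mem_of_mem_erase hx)) with h | h
        · exact absurd h (Finset.ne_of_mem_erase hx)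
        · exact h
      · left
        refine ⟨fun x hx => ?_, hne⟩
        rcases Finset.mem_insert.1 (hQ hx) with h | h
        · exact absurd (h ▸ hx) haQ
        · exact h
    · rintro (⟨hQ, hne⟩ | ⟨R, hR, rfl⟩)
      · exact ⟨hQ.trans (Finset.subset_insert a s), hne⟩
      · exact ⟨Finset.insert_subset_insert a hR, Finset.insert_ne_empty a R⟩
  have hdisj : Disjoint (s.powerset.filter (· ≠ ∅)) (s.powerset.image (insert a)) := by
    rw [Finset.disjoint_left]
    rintro Q hQ hQ'
    simp only [Finset.mem_image, Finset.mem_powerset] at hQ'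
    obtain ⟨R, hR, rfl⟩ := hQ'
    exact ha ((Finset.mem_powerset.1 (Finset.mem_filter.1 hQ).1) (Finset.mem_insert_self a R))
  have hinj : Set.InjOn (insert a) (s.powerset : Set (Finset ι)) := by
    intro R hR R' hR' h
    simp only [Finset.coe_powerset, Set.mem_preimage, Set.mem_powerset_iff,
      Finset.coe_subset] at hR hR'
    have haR : a ∉ R := fun hx => ha (hR hx)
    have haR' : a ∉ R' := fun hx => ha (hR' hx)
    rw [← Finset.erase_insert haR, ← Finset.erase_insert haR', h]
  have hpow : s.powerset = insert ∅ (s.powerset.filter (· ≠ ∅)) := by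
    rw [Finset.filter_ne', Finset.insert_erase (Finset.empty_mem_powerset s)]
  -- compute the image sum
  have himgsum : ∑ Q ∈ s.powerset,
      (-1 : ℝ) ^ ((insert a Q).card - 1) * f (insert a Q)
      = f {a} + ∑ Q ∈ s.powerset.filter (· ≠ ∅),
          ((-1 : ℝ) ^ Q.card * f {a} + (-1 : ℝ) ^ Q.card * f Q) := by
    conv_lhs => rw [hpow]
    rw [Finset.sum_insert (by simp)]
    congr 1
    · simp
    · refine Finset.sum_congr rfl fun Q hQ => ?_
      obtain ⟨hQs, hne⟩ := Finset.mem_filter.1 hQ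
      have haQ : a ∉ Q := fun hx => ha (Finset.mem_powerset.1 hQs hx)
      rw [Finset.card_insert_of_notMem haQ, Nat.add_sub_cancel,
        hf Q (Finset.mem_powerset.1 hQs) (Finset.nonempty_iff_ne_empty.2 hne), mul_add]
  have hcancel : ∀ Q ∈ s.powerset.filter (· ≠ ∅),
      (-1 : ℝ) ^ (Q.card - 1) * f Q = -((-1 : ℝ) ^ Q.card * f Q) := by
    intro Q hQ
    obtain ⟨_, hne⟩ := Finset.mem_filter.1 hQ
    have hc : Q.card ≠ 0 := by simpa [Finset.card_eq_zero] using hne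
    obtain ⟨n, hn⟩ := Nat.exists_eq_succ_of_ne_zero hc
    rw [hn, Nat.succ_sub_one, pow_succ]
    ring
  have hsum : ∑ Q ∈ s.powerset.filter (· ≠ ∅), (-1 : ℝ) ^ Q.card * f {a} = -f {a} := by
    rw [← Finset.sum_mul]
    have h0 : (∑ m ∈ s.powerset, (-1 : ℤ) ^ m.card) = 0 :=
      Finset.sum_powerset_neg_one_pow_card_of_nonempty hs
    have h0' : ∑ m ∈ s.powerset, (-1 : ℝ) ^ m.card = 0 := by
      have := congrArg (fun z : ℤ => (z : ℝ)) h0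
      push_cast at this
      simpa using this
    rw [hpow, Finset.sum_insert (by simp)] at h0'
    simp only [Finset.card_empty, pow_zero] at h0'
    have hz : ∑ Q ∈ s.powerset.filter (· ≠ ∅), (-1 : ℝ) ^ Q.card = -1 := by linarith
    rw [hz]; ring
  rw [hsplit, Finset.sum_union hdisj, Finset.sum_image hinj, himgsum,
    Finset.sum_congr rfl hcancel, Finset.sum_add_distrib, hsum, Finset.sum_neg_distrib]
  ring
end

section
/- Let ι be a type, s a finite subset of ι with |s| ≥ 3, let J : Finset ι → ℝ, let p₁,…,p_k be two-element subsets of s, and let ν₁,…,ν_k ∈ ℝ. Define J′(Q) := J(Q) + Σ_{j : p_j ⊆ Q} ν_j. Then Σ_{Q ⊆ s, Q ≠ ∅} (−1)^{|Q|−1} J′(Q) = Σ_{Q ⊆ s, Q ≠ ∅} (−1)^{|Q|−1} J(Q); equivalently Σ_{Q ⊆ s, Q ≠ ∅} (−1)^{|Q|−1} Σ_{j : p_j ⊆ Q} ν_j = 0. (Adding any number of handles between pairs of subsystems—in particular between nearest neighbours of an annular arrangement—leaves the connectivity count C^N, and hence the N-partite information, invariant.) -/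
lemma handle_sum_zero {ι : Type*} [DecidableEq ι] (s : Finset ι) (hs : 3 ≤ s.card)
    (p : Finset ι) (hp2 : p.card = 2) (hps : p ⊆ s) :
    ∑ Q ∈ (s.powerset.filter (· ≠ ∅)).filter (fun Q => p ⊆ Q),
      (-1 : ℝ) ^ (Q.card - 1) = 0 := by
  have hpne : p ≠ ∅ := by
    intro h; simp [h] at hp2
  have hfilter : (s.powerset.filter (· ≠ ∅)).filter (fun Q => p ⊆ Q)
      = s.powerset.filter (fun Q => p ⊆ Q) := by
    ext Q
    simp only [Finset.mem_filter, Finset.mem_powerset]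
    constructor
    · rintro ⟨⟨h1, _⟩, h3⟩; exact ⟨h1, h3⟩
    · rintro ⟨h1, h3⟩
      refine ⟨⟨h1, ?_⟩, h3⟩
      intro hQ
      exact hpne (Finset.subset_empty.mp (hQ ▸ h3))
  rw [hfilter]
  have key : ∑ Q ∈ s.powerset.filter (fun Q => p ⊆ Q), (-1 : ℝ) ^ (Q.card - 1)
      = ∑ R ∈ (s \ p).powerset, (-1 : ℝ) ^ (R.card + 1) := by
    refine Finset.sum_nbij' (fun Q => Q \ p) (fun R => R ∪ p) ?_ ?_ ?_ ?_ ?_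
    · intro Q hQ
      simp only [Finset.mem_filter, Finset.mem_powerset] at hQ ⊢
      exact Finset.sdiff_subset_sdiff hQ.1 le_rfl
    · intro R hR
      simp only [Finset.mem_filter, Finset.mem_powerset] at hR ⊢
      exact ⟨Finset.union_subset ((Finset.subset_sdiff.mp hR).1) hps,
        Finset.subset_union_right⟩
    · intro Q hQ
      simp only [Finset.mem_filter, Finset.mem_powerset] at hQ
      exact Finset.sdiff_union_of_subset hQ.2
    · intro R hR
      simp only [Finset.mem_powerset] at hR
      exact Finset.union_sdiff_cancel_right (Finset.subset_sdiff.mp hR).2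
    · intro Q hQ
      simp only [Finset.mem_filter, Finset.mem_powerset] at hQ
      have h2 : 2 ≤ Q.card := hp2 ▸ Finset.card_le_card hQ.2
      have hcard : (Q \ p).card + 2 = Q.card := by
        rw [Finset.card_sdiff_of_subset hQ.2, hp2]; omega
      show (-1 : ℝ) ^ (Q.card - 1) = (-1 : ℝ) ^ ((Q \ p).card + 1)
      congr 1
      omega
  rw [key]
  have hsd : (s \ p).Nonempty := by
    rw [← Finset.card_pos, Finset.card_sdiff_of_subset hps, hp2]; omega
  have hz := Finset.sum_powerset_neg_one_pow_card_of_nonempty hsd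
  have hzR : ∑ R ∈ (s \ p).powerset, (-1 : ℝ) ^ R.card = 0 := by
    have : ((∑ m ∈ (s \ p).powerset, (-1 : ℤ) ^ m.card : ℤ) : ℝ) = 0 := by
      rw [hz]; norm_num
    push_cast at this
    exact this
  calc ∑ R ∈ (s \ p).powerset, (-1 : ℝ) ^ (R.card + 1)
      = -∑ R ∈ (s \ p).powerset, (-1 : ℝ) ^ R.card := by
        rw [← Finset.sum_neg_distrib]
        exact Finset.sum_congr rfl (fun R _ => by ring)
    _ = 0 := by rw [hzR]; ring

/-- Adding any number of handles between pairs of subsystems (e.g. between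
nearest neighbours of an annular arrangement) leaves the connectivity count
invariant: with two-element subsets `p 1, …, p k` of `s` (`|s| ≥ 3`), handle
counts `ν j`, and `J′(Q) = J(Q) + Σ_{j : p j ⊆ Q} ν j`, the alternating sums of
`J′` and `J` over nonempty subsets of `s` coincide; equivalently the alternating
sum of the handle contribution vanishes. -/
theorem connectivity_count_pair_handles
    {ι : Type*} [DecidableEq ι] (s : Finset ι) (hs : 3 ≤ s.card)
    (J : Finset ι → ℝ) (k : ℕ) (p : Fin k → Finset ι)
    (hp2 : ∀ j, (p j).card = 2) (hps : ∀ j, p j ⊆ s) (ν : Fin k → ℝ) :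
    (∑ Q ∈ s.powerset.filter (· ≠ ∅),
        (-1 : ℝ) ^ (Q.card - 1) *
          (J Q + ∑ j ∈ Finset.univ.filter (fun j => p j ⊆ Q), ν j)
      = ∑ Q ∈ s.powerset.filter (· ≠ ∅), (-1 : ℝ) ^ (Q.card - 1) * J Q) ∧
    (∑ Q ∈ s.powerset.filter (· ≠ ∅),
        (-1 : ℝ) ^ (Q.card - 1) *
          (∑ j ∈ Finset.univ.filter (fun j => p j ⊆ Q), ν j) = 0) := by
  have h2 : ∑ Q ∈ s.powerset.filter (· ≠ ∅),
      (-1 : ℝ) ^ (Q.card - 1) *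
        (∑ j ∈ Finset.univ.filter (fun j => p j ⊆ Q), ν j) = 0 := by
    set F := s.powerset.filter (· ≠ ∅) with hF
    have swap : ∑ Q ∈ F,
        (-1 : ℝ) ^ (Q.card - 1) * (∑ j ∈ Finset.univ.filter (fun j => p j ⊆ Q), ν j)
        = ∑ j : Fin k, ν j *
            ∑ Q ∈ F.filter (fun Q => p j ⊆ Q), (-1 : ℝ) ^ (Q.card - 1) :=
      calc ∑ Q ∈ F, (-1 : ℝ) ^ (Q.card - 1) *
              (∑ j ∈ Finset.univ.filter (fun j => p j ⊆ Q), ν j)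
          = ∑ Q ∈ F, ∑ j : Fin k,
              if p j ⊆ Q then (-1 : ℝ) ^ (Q.card - 1) * ν j else 0 := by
            refine Finset.sum_congr rfl fun Q _ => ?_
            rw [Finset.mul_sum, Finset.sum_filter]
        _ = ∑ j : Fin k, ∑ Q ∈ F,
              if p j ⊆ Q then (-1 : ℝ) ^ (Q.card - 1) * ν j else 0 :=
            Finset.sum_comm
        _ = ∑ j : Fin k, ν j *
              ∑ Q ∈ F.filter (fun Q => p j ⊆ Q), (-1 : ℝ) ^ (Q.card - 1) := by
            refine Finset.sum_congr rfl fun j _ => ?_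
            rw [← Finset.sum_filter, Finset.mul_sum]
            exact Finset.sum_congr rfl fun Q _ => mul_comm _ _
    rw [swap]
    refine Finset.sum_eq_zero fun j _ => ?_
    rw [handle_sum_zero s hs (p j) (hp2 j) (hps j), mul_zero]
  refine ⟨?_, h2⟩
  simp_rw [mul_add, Finset.sum_add_distrib, h2, add_zero]
end

section
/- Let ι be a type, s a finite subset of ι with |s| = N ≥ 2, and f : Finset ι → ℝ. For each nonempty Q ⊆ s define the multipartite information functional I_f(Q) := Σ_{P ⊆ Q, P ≠ ∅} (−1)^{|P|−1} f(P). Then I_f(s) = Σ_{μ=1}^{N−2} (−1)^{μ−1} Σ_{R ⊆ s, |R| = N−μ} I_f(R) + (−1)^N ( Σ_{i ∈ s} f({i}) − f(s) ). (Recursion expressing the N-partite information in terms of all lower-order multipartite informations.) -/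
open Finset

/-- The multipartite information functional: for `f : Finset ι → ℝ` (the
entanglement entropy of the union of the subsystems indexed by a finite set)
and a finite index set `Q`, `I_f(Q) = Σ_{P ⊆ Q, P ≠ ∅} (-1)^(|P|-1) f(P)`. -/
def multiInfo {ι : Type*} [DecidableEq ι] (f : Finset ι → ℝ) (Q : Finset ι) : ℝ :=
  ∑ P ∈ Q.powerset.filter (· ≠ ∅), (-1 : ℝ) ^ (P.card - 1) * f P

lemma alt_sum_choose (m t : ℕ) (ht : m < t) :
    ∑ μ ∈ Finset.range t, (-1:ℝ)^μ * (m.choose μ) = if m = 0 then 1 else 0 := by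
  have heq : ∑ μ ∈ Finset.range t, (-1:ℝ)^μ * (m.choose μ)
      = ∑ μ ∈ Finset.range (m+1), (-1:ℝ)^μ * (m.choose μ) := by
    rw [← Finset.sum_subset (Finset.range_subset_range.2 ht)]
    intro x _ hx
    simp only [Finset.mem_range, not_lt] at hx
    simp [Nat.choose_eq_zero_of_lt (by omega : m < x)]
  rw [heq]
  have h := congrArg (Int.cast : ℤ → ℝ) (Int.alternating_sum_range_choose (n := m))
  push_cast at h
  simpa using h

lemma count_superset {ι : Type*} [DecidableEq ι]
    (s P : Finset ι) (hP : P ⊆ s) (μ : ℕ) (hμ : μ ≤ s.card) :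
    ((s.powersetCard (s.card - μ)).filter (fun R => P ⊆ R)).card
      = (s.card - P.card).choose μ := by
  rw [← Finset.card_sdiff_of_subset hP, ← Finset.card_powersetCard]
  apply Finset.card_bij (fun R _ => s \ R)
  · intro R hR
    simp only [Finset.mem_filter, Finset.mem_powersetCard] at hR
    obtain ⟨⟨hRs, hRc⟩, hPR⟩ := hR
    rw [Finset.mem_powersetCard]
    refine ⟨Finset.sdiff_subset_sdiff le_rfl hPR, ?_⟩
    rw [Finset.card_sdiff_of_subset hRs, hRc]
    omega
  · intro R₁ h₁ R₂ h₂ he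
    simp only [Finset.mem_filter, Finset.mem_powersetCard] at h₁ h₂
    rw [← Finset.sdiff_sdiff_eq_self h₁.1.1, ← Finset.sdiff_sdiff_eq_self h₂.1.1, he]
  · intro C hC
    rw [Finset.mem_powersetCard] at hC
    have hCs : C ⊆ s := hC.1.trans Finset.sdiff_subset
    refine ⟨s \ C, ?_, ?_⟩
    · simp only [Finset.mem_filter, Finset.mem_powersetCard]
      refine ⟨⟨Finset.sdiff_subset, ?_⟩, ?_⟩
      · rw [Finset.card_sdiff_of_subset hCs, hC.2]
      · intro x hx
        rw [Finset.mem_sdiff]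
        exact ⟨hP hx, fun hxC => (Finset.mem_sdiff.1 (hC.1 hxC)).2 hx⟩
    · exact Finset.sdiff_sdiff_eq_self hCs

lemma swap_sum {ι : Type*} [DecidableEq ι] (s : Finset ι) (μ : ℕ) (hμ : μ ≤ s.card)
    (f : Finset ι → ℝ) :
    ∑ R ∈ s.powersetCard (s.card - μ), multiInfo f R
      = ∑ P ∈ s.powerset.filter (· ≠ ∅),
          (((s.card - P.card).choose μ : ℝ)) * ((-1:ℝ)^(P.card-1) * f P) := by
  have h : ∀ (R P : Finset ι),
      R ∈ s.powersetCard (s.card - μ) ∧ P ∈ R.powerset.filter (· ≠ ∅)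
      ↔ R ∈ (s.powersetCard (s.card - μ)).filter (fun R => P ⊆ R)
          ∧ P ∈ s.powerset.filter (· ≠ ∅) := by
    intro R P
    simp only [Finset.mem_powersetCard, Finset.mem_filter, Finset.mem_powerset, ne_eq]
    constructor
    · rintro ⟨⟨h1, h2⟩, h3, h4⟩
      exact ⟨⟨⟨h1, h2⟩, h3⟩, h3.trans h1, h4⟩
    · rintro ⟨⟨⟨h1, h2⟩, h3⟩, h4, h5⟩
      exact ⟨⟨h1, h2⟩, h3, h5⟩
  unfold multiInfo
  rw [Finset.sum_comm' h]
  refine Finset.sum_congr rfl fun P hP => ?_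
  simp only [Finset.mem_filter, Finset.mem_powerset] at hP
  rw [Finset.sum_const, count_superset s P hP.1 μ hμ, nsmul_eq_mul]

lemma gval (N m : ℕ) (hN : 2 ≤ N) (hm : m ≤ N - 1) :
    ∑ μ ∈ Finset.Icc 1 (N-2), (-1:ℝ)^(μ-1) * (m.choose μ)
      = if m = 0 then 0 else if m = N - 1 then 1 + (-1:ℝ)^(N-1) else 1 := by
  have hIcc : Finset.Icc 1 (N-2) = Finset.Ico 1 (N-1) := by
    rw [← Finset.Ico_add_one_right_eq_Icc]
    congr 1
    omega
  have hS : ∑ μ ∈ Finset.range (N-1), (-1:ℝ)^μ * (m.choose μ)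
      = 1 + ∑ μ ∈ Finset.Ico 1 (N-1), (-1:ℝ)^μ * (m.choose μ) := by
    rw [Finset.range_eq_Ico, Finset.sum_eq_sum_Ico_succ_bot (by omega : 0 < N - 1)]
    simp
  have hneg : ∑ μ ∈ Finset.Icc 1 (N-2), (-1:ℝ)^(μ-1) * (m.choose μ)
      = - ∑ μ ∈ Finset.Ico 1 (N-1), (-1:ℝ)^μ * (m.choose μ) := by
    rw [hIcc, ← Finset.sum_neg_distrib]
    refine Finset.sum_congr rfl fun μ hμ => ?_
    rw [Finset.mem_Ico] at hμ
    obtain ⟨ν, rfl⟩ : ∃ ν, μ = ν + 1 := ⟨μ - 1, by omega⟩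
    simp [pow_succ]
  rcases lt_or_eq_of_le hm with hlt | heq
  · have halt := alt_sum_choose m (N-1) hlt
    rw [hS] at halt
    rw [hneg]
    have hmne : m ≠ N - 1 := by omega
    rcases eq_or_ne m 0 with h0 | h0
    · rw [if_pos h0] at halt
      rw [if_pos h0]
      linarith
    · rw [if_neg h0] at halt
      rw [if_neg h0, if_neg hmne]
      linarith
  · -- m = N - 1
    have hm1 : 1 ≤ m := by omega
    have h1 := alt_sum_choose m (m+1) (by omega)
    rw [if_neg (by omega : m ≠ 0), Finset.sum_range_succ, Nat.choose_self] at h1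
    have hrange : Finset.range (N-1) = Finset.range m := by rw [heq]
    have hS2 : ∑ μ ∈ Finset.range (N-1), (-1:ℝ)^μ * (m.choose μ) = -(-1:ℝ)^m := by
      rw [hrange]
      push_cast at h1
      linarith
    rw [hneg, if_neg (by omega : m ≠ 0), if_pos heq]
    have : ∑ μ ∈ Finset.Ico 1 (N-1), (-1:ℝ)^μ * (m.choose μ) = -(-1:ℝ)^m - 1 := by
      rw [hS] at hS2; linarith
    rw [this, heq]
    ring

/-- Recursion expressing the `N`-partite information in terms of all lower-order
multipartite informations:
`I_f(s) = Σ_{μ=1}^{N-2} (-1)^(μ-1) Σ_{R ⊆ s, |R| = N-μ} I_f(R)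
          + (-1)^N (Σ_{i ∈ s} f({i}) - f(s))`. -/
theorem multiInfo_recursion {ι : Type*} [DecidableEq ι]
    (s : Finset ι) (N : ℕ) (hcard : s.card = N) (hN : 2 ≤ N)
    (f : Finset ι → ℝ) :
    multiInfo f s
      = (∑ μ ∈ Finset.Icc 1 (N - 2), (-1 : ℝ) ^ (μ - 1) *
          ∑ R ∈ s.powersetCard (N - μ), multiInfo f R)
        + (-1 : ℝ) ^ N * ((∑ i ∈ s, f {i}) - f s) := by
  subst hcard
  set N := s.card with hNdef
  set T := s.powerset.filter (· ≠ ∅) with hT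
  have hsne : s ≠ ∅ := by
    intro h
    have h0 : N = 0 := by rw [hNdef, h, Finset.card_empty]
    omega
  have hsT : s ∈ T := by
    simp [hT, hsne]
  -- rewrite the single-site sum
  have hsingles : (∑ i ∈ s, f {i}) = ∑ P ∈ T, (if P.card = 1 then (1:ℝ) else 0) * f P := by
    simp only [ite_mul, one_mul, zero_mul]
    rw [Finset.sum_ite, Finset.sum_const_zero, add_zero]
    apply Finset.sum_bij (fun i _ => ({i} : Finset ι))
    · intro i hi
      simp [hT, Finset.singleton_subset_iff, hi]
    · intro i _ j _ h
      exact Finset.singleton_injective h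
    · intro P hP
      simp only [hT, Finset.mem_filter, Finset.mem_powerset] at hP
      obtain ⟨x, hx⟩ := Finset.card_eq_one.1 hP.2
      exact ⟨x, hP.1.1 (hx ▸ Finset.mem_singleton_self x), hx.symm⟩
    · intro i _
      rfl
  have hfs : f s = ∑ P ∈ T, (if P = s then (1:ℝ) else 0) * f P := by
    simp only [ite_mul, one_mul, zero_mul]
    rw [Finset.sum_ite_eq' T s f, if_pos hsT]
  -- rewrite the double sum
  have h1 : (∑ μ ∈ Finset.Icc 1 (N - 2), (-1 : ℝ) ^ (μ - 1) *
        ∑ R ∈ s.powersetCard (N - μ), multiInfo f R)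
      = ∑ P ∈ T, (∑ μ ∈ Finset.Icc 1 (N-2),
            (-1:ℝ)^(μ-1) * ((N - P.card).choose μ : ℝ))
          * ((-1:ℝ)^(P.card-1) * f P) := by
    rw [Finset.sum_congr rfl (fun μ hμ => by
      rw [swap_sum s μ (by rw [Finset.mem_Icc] at hμ; omega) f])]
    simp_rw [Finset.mul_sum]
    rw [Finset.sum_comm]
    simp_rw [← mul_assoc, ← Finset.sum_mul]
    rfl
  rw [h1, hsingles, hfs, ← Finset.sum_sub_distrib, Finset.mul_sum, ← Finset.sum_add_distrib]
  show multiInfo f s = _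
  unfold multiInfo
  refine Finset.sum_congr rfl fun P hP => ?_
  simp only [hT, Finset.mem_filter, Finset.mem_powerset] at hP
  obtain ⟨hPs, hPne⟩ := hP
  have hk1 : 1 ≤ P.card := Finset.card_pos.2 (Finset.nonempty_iff_ne_empty.2 hPne)
  have hkN : P.card ≤ N := Finset.card_le_card hPs
  have hgv := gval N (N - P.card) hN (by omega)
  rw [hgv]
  have hpowN : (-1:ℝ)^N = (-1:ℝ)^(N-1) * (-1) := by
    rw [← pow_succ]
    congr 1
    omega
  rcases eq_or_ne P.card N with hceq | hcne
  · -- P = s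
    have hPeq : P = s := Finset.eq_of_subset_of_card_le hPs (by omega)
    have : N - P.card = 0 := by omega
    rw [this, if_pos rfl, if_pos hPeq, if_neg (by omega : ¬ P.card = 1)]
    have hpk : (-1:ℝ)^(P.card - 1) = (-1:ℝ)^(N-1) := by rw [hceq]
    rw [hpk, hpowN]
    ring
  · have hPnes : P ≠ s := fun h => hcne (h ▸ rfl)
    rw [if_neg (by omega : ¬ N - P.card = 0), if_neg hPnes]
    rcases eq_or_ne P.card 1 with hc1 | hc1
    · rw [if_pos (by omega : N - P.card = N - 1), if_pos hc1, hc1]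
      rw [hpowN]
      ring
    · rw [if_neg (by omega : ¬ N - P.card = N - 1), if_neg hc1]
      ring
end

section
/- Let n ≥ 4 and let G be the simple graph on vertex set Fin n in which the vertices 0,…,n−2 form the cycle graph C_{n−1} (i adjacent to i+1 mod (n−1)) and the vertex n−1 is adjacent exactly to the vertex 0. Define J : Finset (Fin n) → ℤ by J(S) = H₀(G[S]) + (1 if {0,…,n−2} ⊆ S, else 0), where H₀(G[S]) is the number of connected components of the induced subgraph of G on S. Then Σ_{S ⊆ Fin n, S ≠ ∅} (−1)^{|S|−1} J(S) = 0. (A closed annular collection of n−1 subsystems with one appendage subsystem attached has vanishing connectivity count C^N, hence vanishing N-partite information; the indicator term records the extra boundary component of any union that contains the full annulus.) -/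
/-- The graph on `Fin n` in which the vertices `0, …, n-2` form the cycle graph
`C_{n-1}` (`i` adjacent to `i+1 mod (n-1)`), and the vertex `n-1` is adjacent
exactly to the vertex `0`. -/
def annulusWithAppendage (n : ℕ) : SimpleGraph (Fin n) :=
  SimpleGraph.fromRel (fun i j =>
    ((i : ℕ) < n - 1 ∧ (j : ℕ) < n - 1 ∧ ((i : ℕ) + 1) % (n - 1) = (j : ℕ)) ∨
    ((i : ℕ) = n - 1 ∧ (j : ℕ) = 0))

lemma eq_of_walk {V : Type*} {G : SimpleGraph V} {β : Sort*} (f : V → β)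
    (h : ∀ a b, G.Adj a b → f a = f b) {a b : V} (p : G.Walk a b) : f a = f b := by
  induction p with
  | nil => rfl
  | cons hadj q ih => exact (h _ _ hadj).trans ih

/-- Lift a function constant on adjacency to connected components. -/
def ccLiftAdj {V : Type*} {G : SimpleGraph V} {β : Sort*} (f : V → β)
    (h : ∀ a b, G.Adj a b → f a = f b) : G.ConnectedComponent → β :=
  SimpleGraph.ConnectedComponent.lift f (fun a b p _ => eq_of_walk f h p)

@[simp] lemma ccLiftAdj_mk {V : Type*} {G : SimpleGraph V} {β : Sort*} (f : V → β)
    (h : ∀ a b, G.Adj a b → f a = f b) (x : V) :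
    ccLiftAdj f h (G.connectedComponentMk x) = f x := rfl

lemma H0_empty {V : Type*} (G : SimpleGraph V) : H0 G (∅ : Set V) = 0 := by
  have : IsEmpty (G.induce (∅ : Set V)).ConnectedComponent :=
    ⟨fun c => SimpleGraph.ConnectedComponent.ind
      (fun x => absurd x.2 (Set.notMem_empty x.1)) c⟩
  exact Nat.card_of_isEmpty

/-- Adding an isolated vertex increases the component count by one. -/
lemma H0_insert_isolated {V : Type*} [Finite V] [DecidableEq V] (G : SimpleGraph V)
    (S : Set V) (v : V) (hv : v ∉ S) (hiso : ∀ w ∈ S, ¬ G.Adj v w) :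
    H0 G (insert v S) = H0 G S + 1 := by
  classical
  have hmemv : v ∈ insert v S := Set.mem_insert _ _
  have hstep : ∀ a b : ↥(insert v S), (G.induce (insert v S)).Adj a b →
      (if h : (a : V) = v then (none : Option (G.induce S).ConnectedComponent)
        else some ((G.induce S).connectedComponentMk ⟨a, a.2.resolve_left h⟩)) =
      (if h : (b : V) = v then none
        else some ((G.induce S).connectedComponentMk ⟨b, b.2.resolve_left h⟩)) := by
    rintro a b hab
    have hadj : G.Adj (a : V) (b : V) := hab
    have ha : (a : V) ≠ v := by
      intro h
      rcases Set.mem_insert_iff.mp b.2 with hb | hb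
      · rw [h, hb] at hadj; exact hadj.ne rfl
      · rw [h] at hadj; exact hiso _ hb hadj
    have hb : (b : V) ≠ v := by
      intro h
      rcases Set.mem_insert_iff.mp a.2 with ha' | ha'
      · rw [h, ha'] at hadj; exact hadj.ne rfl
      · rw [h] at hadj; exact hiso _ ha' hadj.symm
    rw [dif_neg ha, dif_neg hb]
    exact congrArg some (SimpleGraph.ConnectedComponent.connectedComponentMk_eq_of_adj hadj)
  have hstep' : ∀ a b : ↥S, (G.induce S).Adj a b →
      ((G.induce (insert v S)).connectedComponentMk ⟨a, Set.mem_insert_of_mem _ a.2⟩) =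
      ((G.induce (insert v S)).connectedComponentMk ⟨b, Set.mem_insert_of_mem _ b.2⟩) := by
    rintro a b hab
    exact SimpleGraph.ConnectedComponent.connectedComponentMk_eq_of_adj hab
  let e : (G.induce (insert v S)).ConnectedComponent ≃
      Option (G.induce S).ConnectedComponent :=
    { toFun := ccLiftAdj _ hstep
      invFun := fun o => o.elim ((G.induce (insert v S)).connectedComponentMk ⟨v, hmemv⟩)
        (ccLiftAdj _ hstep')
      left_inv := by
        refine SimpleGraph.ConnectedComponent.ind (fun x => ?_)
        show Option.elim _ _ _ = _
        by_cases h : (x : V) = v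
        · rw [ccLiftAdj_mk, dif_pos h]
          all_goals exact congrArg _ (Subtype.ext h.symm)
        · rw [ccLiftAdj_mk, dif_neg h, Option.elim_some, ccLiftAdj_mk]
          all_goals exact congrArg _ (Subtype.ext rfl)
      right_inv := by
        rintro (_ | c)
        · exact dif_pos rfl
        · refine SimpleGraph.ConnectedComponent.ind (fun x => ?_) c
          have hx : (x : V) ≠ v := fun h => hv (h ▸ x.2)
          show ccLiftAdj _ hstep (ccLiftAdj _ hstep' _) = _
          rw [ccLiftAdj_mk, ccLiftAdj_mk, dif_neg hx]
          all_goals exact congrArg some (congrArg _ (Subtype.ext rfl)) }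
  unfold H0
  rw [Nat.card_congr e, Finite.card_option]

/-- Adding a pendant vertex whose unique neighbour lies in the set preserves the
component count. -/
lemma H0_insert_pendant {V : Type*} [Finite V] [DecidableEq V] (G : SimpleGraph V)
    (S : Set V) (v u : V) (hv : v ∉ S) (hu : u ∈ S) (hadj : G.Adj v u)
    (huniq : ∀ w, G.Adj v w → w = u) :
    H0 G (insert v S) = H0 G S := by
  classical
  have hmemv : v ∈ insert v S := Set.mem_insert _ _
  have hstep : ∀ a b : ↥(insert v S), (G.induce (insert v S)).Adj a b →
      (G.induce S).connectedComponentMk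
        (if h : (a : V) = v then ⟨u, hu⟩ else ⟨a, a.2.resolve_left h⟩) =
      (G.induce S).connectedComponentMk
        (if h : (b : V) = v then ⟨u, hu⟩ else ⟨b, b.2.resolve_left h⟩) := by
    rintro a b hab
    have hGadj : G.Adj (a : V) (b : V) := hab
    by_cases ha : (a : V) = v
    · have hbu : (b : V) = u := by
        refine huniq _ ?_
        have h' := hGadj
        rw [ha] at h'
        exact h'
      have hbv : (b : V) ≠ v := fun h => hGadj.ne (ha.trans h.symm)
      rw [dif_pos ha, dif_neg hbv]
      exact congrArg _ (Subtype.ext hbu.symm)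
    · by_cases hb : (b : V) = v
      · have hau : (a : V) = u := by
          refine huniq _ ?_
          have h' := hGadj.symm
          rw [hb] at h'
          exact h'
        rw [dif_pos hb, dif_neg ha]
        exact congrArg _ (Subtype.ext hau)
      · rw [dif_neg ha, dif_neg hb]
        exact SimpleGraph.ConnectedComponent.connectedComponentMk_eq_of_adj hGadj
  have hstep' : ∀ a b : ↥S, (G.induce S).Adj a b →
      ((G.induce (insert v S)).connectedComponentMk ⟨a, Set.mem_insert_of_mem _ a.2⟩) =
      ((G.induce (insert v S)).connectedComponentMk ⟨b, Set.mem_insert_of_mem _ b.2⟩) :=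
    fun a b hab => SimpleGraph.ConnectedComponent.connectedComponentMk_eq_of_adj hab
  let e : (G.induce (insert v S)).ConnectedComponent ≃ (G.induce S).ConnectedComponent :=
    { toFun := ccLiftAdj _ hstep
      invFun := ccLiftAdj _ hstep'
      left_inv := by
        refine SimpleGraph.ConnectedComponent.ind (fun x => ?_)
        show ccLiftAdj _ hstep' (ccLiftAdj _ hstep _) = _
        rw [ccLiftAdj_mk]
        by_cases h : (x : V) = v
        · rw [dif_pos h, ccLiftAdj_mk]
          have hadj' : (G.induce (insert v S)).Adj ⟨u, Set.mem_insert_of_mem _ hu⟩ ⟨v, hmemv⟩ :=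
            hadj.symm
          refine (SimpleGraph.ConnectedComponent.connectedComponentMk_eq_of_adj hadj').trans ?_
          exact congrArg _ (Subtype.ext h.symm)
        · rw [dif_neg h, ccLiftAdj_mk]
          all_goals exact congrArg _ (Subtype.ext rfl)
      right_inv := by
        refine SimpleGraph.ConnectedComponent.ind (fun x => ?_)
        have hx : (x : V) ≠ v := fun h => hv (h ▸ x.2)
        show ccLiftAdj _ hstep (ccLiftAdj _ hstep' _) = _
        rw [ccLiftAdj_mk, ccLiftAdj_mk, dif_neg hx]
        all_goals exact congrArg _ (Subtype.ext rfl) }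
  unfold H0
  rw [Nat.card_congr e]

lemma adj_last {n : ℕ} (hn : 4 ≤ n) (w : Fin n) :
    (annulusWithAppendage n).Adj ⟨n - 1, by omega⟩ w ↔ (w : ℕ) = 0 := by
  rw [annulusWithAppendage, SimpleGraph.fromRel_adj]
  have hval : ((⟨n - 1, by omega⟩ : Fin n) : ℕ) = n - 1 := rfl
  constructor
  · rintro ⟨hne, (⟨h1, h2, h3⟩ | ⟨h1, h2⟩) | (⟨h1, h2, h3⟩ | ⟨h1, h2⟩)⟩ <;>
      rw [hval] at * <;> omega
  · intro h
    refine ⟨?_, Or.inl (Or.inr ⟨hval, h⟩)⟩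
    intro he
    rw [← he, hval] at h
    omega

/-- A closed annular collection of `n-1` subsystems with one appendage subsystem
attached has vanishing connectivity count: with
`J(S) = H₀(G[S]) + (1 if {0,…,n-2} ⊆ S else 0)`,
`Σ_{S ≠ ∅} (-1)^(|S|-1) J(S) = 0`. -/
theorem connectivity_count_annulus_with_appendage (n : ℕ) (hn : 4 ≤ n) :
    ∑ S ∈ (Finset.univ : Finset (Fin n)).powerset.filter (· ≠ ∅),
      (-1 : ℤ) ^ (S.card - 1) *
        ((H0 (annulusWithAppendage n) (↑S : Set (Fin n)) : ℤ) +
          (if Finset.univ.filter (fun i : Fin n => (i : ℕ) < n - 1) ⊆ S then 1 else 0))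
    = 0 := by
  classical
  set G := annulusWithAppendage n with hG
  set v : Fin n := ⟨n - 1, by omega⟩ with hvdef
  set z : Fin n := ⟨0, by omega⟩ with hzdef
  set A : Finset (Fin n) := Finset.univ.filter (fun i : Fin n => (i : ℕ) < n - 1) with hA
  set f : Finset (Fin n) → ℤ := fun S =>
    (-1 : ℤ) ^ (S.card - 1) * ((H0 G (↑S : Set (Fin n)) : ℤ) + (if A ⊆ S then 1 else 0))
    with hf
  have hzA : z ∈ A := by simp [hA, hzdef]; omega
  have hvA : v ∉ A := by simp [hA, hvdef]
  have hAne : A ≠ ∅ := fun h => by simp [h] at hzA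
  have hzv : z ≠ v := by
    intro h
    have := congrArg Fin.val h
    simp [hzdef, hvdef] at this
    omega
  -- the key counting fact for each T not containing v
  have key : ∀ T : Finset (Fin n), v ∉ T →
      (H0 G (↑(insert v T) : Set (Fin n)) : ℤ) =
        (H0 G (↑T : Set (Fin n)) : ℤ) + (if z ∈ T then 0 else 1) := by
    intro T hvT
    have hvT' : v ∉ (↑T : Set (Fin n)) := by simpa using hvT
    by_cases hz : z ∈ T
    · rw [if_pos hz, add_zero, Finset.coe_insert]
      have := H0_insert_pendant G (↑T : Set (Fin n)) v z hvT' (by simpa using hz)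
        ((adj_last hn z).mpr rfl)
        (fun w hw => by
          have := (adj_last hn w).mp hw
          exact Fin.ext this)
      rw [this]
    · rw [if_neg hz, Finset.coe_insert]
      have := H0_insert_isolated G (↑T : Set (Fin n)) v hvT'
        (fun w hw hadj => by
          have : w = z := Fin.ext ((adj_last hn w).mp hadj)
          exact hz (by simpa [this] using hw))
      rw [this]
      push_cast
      ring
  -- extend the sum to the whole powerset: the empty-set term vanishes
  have hsum : ∑ S ∈ (Finset.univ : Finset (Fin n)).powerset.filter (· ≠ ∅), f S
      = ∑ S ∈ (Finset.univ : Finset (Fin n)).powerset, f S := by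
    refine Finset.sum_subset (Finset.filter_subset _ _) ?_
    intro x hx hnx
    have : x = ∅ := by
      simpa [Finset.mem_filter, hx] using hnx
    subst this
    simp [hf, H0_empty, hAne, Finset.subset_empty]
  show ∑ S ∈ (Finset.univ : Finset (Fin n)).powerset.filter (· ≠ ∅), f S = 0
  rw [hsum]
  -- split off the vertex v
  have huniv : (Finset.univ : Finset (Fin n)) = insert v (Finset.univ.erase v) :=
    (Finset.insert_erase (Finset.mem_univ v)).symm
  rw [huniv, Finset.sum_powerset_insert (Finset.notMem_erase v _), ← Finset.sum_add_distrib]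
  -- each paired term reduces to a simple sign
  have hpair : ∀ T ∈ (Finset.univ.erase v).powerset,
      f T + f (insert v T) = (-1 : ℤ) ^ T.card * (if z ∈ T then 0 else 1) := by
    intro T hT
    have hvT : v ∉ T := fun h =>
      (Finset.notMem_erase v _) (Finset.mem_powerset.mp hT h)
    have hcard : (insert v T).card = T.card + 1 := Finset.card_insert_of_notMem hvT
    have hind : (if A ⊆ insert v T then (1 : ℤ) else 0) = (if A ⊆ T then 1 else 0) := by
      simp only [Finset.subset_insert_iff_of_notMem hvA]
    simp only [hf]
    rw [key T hvT, hcard, hind]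
    by_cases hTe : T = ∅
    · subst hTe
      simp [H0_empty, hAne, Finset.subset_empty, hzA]
    · obtain ⟨k, hk⟩ : ∃ k, T.card = k + 1 :=
        Nat.exists_eq_succ_of_ne_zero (fun h => hTe (Finset.card_eq_zero.mp h))
      rw [hk]
      simp only [Nat.add_sub_cancel]
      ring
  rw [Finset.sum_congr rfl hpair]
  -- now split off the vertex z
  have hzW : z ∈ Finset.univ.erase v := Finset.mem_erase.mpr ⟨hzv, Finset.mem_univ z⟩
  have hW : Finset.univ.erase v = insert z ((Finset.univ.erase v).erase z) :=
    (Finset.insert_erase hzW).symm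
  rw [hW, Finset.sum_powerset_insert (Finset.notMem_erase z _)]
  have h1 : ∀ T ∈ ((Finset.univ.erase v).erase z).powerset,
      (-1 : ℤ) ^ T.card * (if z ∈ T then 0 else 1) = (-1 : ℤ) ^ T.card := by
    intro T hT
    have : z ∉ T := fun h =>
      (Finset.notMem_erase z _) (Finset.mem_powerset.mp hT h)
    rw [if_neg this, mul_one]
  have h2 : ∀ T ∈ ((Finset.univ.erase v).erase z).powerset,
      (-1 : ℤ) ^ (insert z T).card * (if z ∈ insert z T then 0 else 1) = 0 := by
    intro T hT
    rw [if_pos (Finset.mem_insert_self z T), mul_zero]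
  rw [Finset.sum_congr rfl h1, Finset.sum_congr rfl h2, Finset.sum_const,
    smul_zero, add_zero]
  refine Finset.sum_powerset_neg_one_pow_card_of_nonempty ?_
  rw [← Finset.card_pos, Finset.card_erase_of_mem hzW, Finset.card_erase_of_mem (Finset.mem_univ v)]
  simp
  omega
end

section
/- Let n ≥ 3, let C_n be the cycle graph on vertex set Fin n, and let S be a nonempty proper subset of Fin n. Then the number of connected components of the induced subgraph C_n[S] equals the number of elements i ∈ S such that i+1 mod n ∉ S. (Every proper induced subgraph of a cycle graph is a disjoint union of arcs, one for each maximal cyclic run of consecutive vertices in S.) -/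
open SimpleGraph Finset
open Fin.NatCast Fin.CommRing

/-- Every proper induced subgraph of the cycle graph `C_n` is a disjoint union of
arcs, one for each maximal cyclic run of consecutive vertices: for a nonempty
proper subset `S ⊆ Fin n` (`n ≥ 3`), the number of connected components of
`C_n[S]` equals the number of `i ∈ S` with `i + 1 (mod n) ∉ S`. -/
theorem cycleGraph_induced_components (n : ℕ) (hn : 3 ≤ n)
    (S : Finset (Fin n)) (hS : S.Nonempty) (hS' : S ≠ Finset.univ) :
    Nat.card ((SimpleGraph.cycleGraph n).induce (↑S : Set (Fin n))).ConnectedComponent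
      = (S.filter (fun i : Fin n => i + (⟨1, by omega⟩ : Fin n) ∉ S)).card := by
  haveI : NeZero n := ⟨by omega⟩
  have h1 : (⟨1, by omega⟩ : Fin n) = 1 := by
    apply Fin.ext
    simp [Fin.val_one, Nat.mod_eq_of_lt (by omega : 1 < n)]
  rw [h1]
  -- u outside S
  obtain ⟨u, hu⟩ : ∃ u, u ∉ S := by
    by_contra h; push_neg at h
    exact hS' (Finset.eq_univ_iff_forall.2 h)
  -- existence of termination
  have hex : ∀ v : Fin n, ∃ m : ℕ, v + ((m + 1 : ℕ) : Fin n) ∉ S := by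
    intro v
    rcases eq_or_ne u v with rfl | hne
    · refine ⟨n - 1, ?_⟩
      have : ((n - 1 + 1 : ℕ) : Fin n) = 0 := by
        rw [Nat.sub_add_cancel (by omega)]; simp
      rw [this, add_zero]; exact hu
    · refine ⟨(u - v).val - 1, ?_⟩
      have hne' : u - v ≠ 0 := sub_ne_zero.2 hne
      have hpos : 1 ≤ (u - v).val := by
        rcases Nat.eq_zero_or_pos (u - v).val with h | h
        · exact absurd (Fin.ext h) hne'
        · exact h
      rw [Nat.sub_add_cancel hpos, Fin.cast_val_eq_self]
      rwa [add_sub_cancel]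
  let d : Fin n → ℕ := fun v => Nat.find (hex v)
  let e : Fin n → Fin n := fun v => v + ((d v : ℕ) : Fin n)
  have hd : ∀ v, v + ((d v + 1 : ℕ) : Fin n) ∉ S := fun v => Nat.find_spec (hex v)
  have hlt : ∀ v, ∀ m < d v, v + ((m + 1 : ℕ) : Fin n) ∈ S := by
    intro v m hm
    have := Nat.find_min (hex v) hm
    simpa using this
  have mem_of_le : ∀ v ∈ S, ∀ j ≤ d v, v + ((j : ℕ) : Fin n) ∈ S := by
    intro v hv j hj
    cases j with
    | zero => simpa using hv
    | succ k => exact hlt v k (by omega)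
  have e_mem : ∀ v ∈ S, e v ∈ S := fun v hv => mem_of_le v hv (d v) le_rfl
  have e_succ_not : ∀ v, e v + 1 ∉ S := by
    intro v
    have := hd v
    have hc : v + ((d v + 1 : ℕ) : Fin n) = e v + 1 := by
      show v + ((d v + 1 : ℕ) : Fin n) = v + ((d v : ℕ) : Fin n) + 1
      push_cast
      ring
    rwa [hc] at this
  have d_zero : ∀ v, v + 1 ∉ S → d v = 0 := by
    intro v hv
    refine Nat.find_eq_zero (hex v) |>.2 ?_
    simpa using hv
  have e_fix : ∀ v, v + 1 ∉ S → e v = v := by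
    intro v hv
    show v + ((d v : ℕ) : Fin n) = v
    rw [d_zero v hv]; simp
  have e_step : ∀ v, v + 1 ∈ S → e v = e (v + 1) := by
    intro v hv
    have h0 : ¬ (v + ((0 + 1 : ℕ) : Fin n) ∉ S) := by simpa using hv
    have hdpos : 0 < d v := by
      rcases Nat.eq_zero_or_pos (d v) with h | h
      · exact absurd (Nat.find_eq_zero (hex v) |>.1 h) h0
      · exact h
    have key : ∀ m : ℕ, v + ((m + 1 + 1 : ℕ) : Fin n) = (v + 1) + ((m + 1 : ℕ) : Fin n) := by
      intro m; push_cast; ring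
    have hle : d v ≤ d (v + 1) + 1 := by
      apply Nat.find_le
      rw [key]
      exact hd (v + 1)
    have hge : d (v + 1) + 1 ≤ d v := by
      have : (v + 1) + ((d v - 1 + 1 : ℕ) : Fin n) ∉ S := by
        rw [← key, Nat.sub_add_cancel hdpos]
        exact hd v
      have h2 : Nat.find (hex (v + 1)) ≤ d v - 1 := Nat.find_le this
      have h3 : d (v + 1) ≤ d v - 1 := h2
      omega
    have hdv : d v = d (v + 1) + 1 := le_antisymm hle hge
    show v + ((d v : ℕ) : Fin n) = (v + 1) + ((d (v + 1) : ℕ) : Fin n)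
    rw [hdv]; push_cast; ring
  -- the induced graph
  set G := (SimpleGraph.cycleGraph n).induce (↑S : Set (Fin n)) with hG
  have adj_iff : ∀ u v : Fin n, (SimpleGraph.cycleGraph n).Adj u v ↔ u - v = 1 ∨ v - u = 1 := by
    intro a b
    rw [cycleGraph_adj']
    simp [Fin.ext_iff, Fin.val_one', Nat.mod_eq_of_lt (show 1 < n by omega)]
  -- e invariant under adjacency
  have e_adj : ∀ a b : Fin n, a ∈ S → b ∈ S → (SimpleGraph.cycleGraph n).Adj a b →
      e a = e b := by
    intro a b ha hb hadj
    rcases (adj_iff a b).1 hadj with h | h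
    · have hab : a = b + 1 := by rw [← h]; ring
      subst hab
      exact (e_step b ha).symm
    · have hba : b = a + 1 := by rw [← h]; ring
      subst hba
      exact e_step a hb
  -- reachability invariance
  have e_reach : ∀ v w : (↑S : Set (Fin n)), G.Reachable v w → e v.val = e w.val := by
    intro v w ⟨p⟩
    induction p with
    | nil => rfl
    | cons hadj p ih =>
      rename_i x y z
      have : e x.val = e y.val := e_adj x.val y.val x.2 y.2 hadj
      rw [this, ih]
  -- connectivity from v to e v
  have key : ∀ v : (↑S : Set (Fin n)), ∀ j, j ≤ d v.val →
      ∀ hmem : v.val + ((j : ℕ) : Fin n) ∈ S,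
      G.Reachable v ⟨v.val + ((j : ℕ) : Fin n), hmem⟩ := by
    intro v j
    induction j with
    | zero =>
      intro _ hmem
      have hveq : (⟨v.val + ((0 : ℕ) : Fin n), hmem⟩ : (↑S : Set (Fin n))) = v :=
        Subtype.ext (by simp)
      rw [hveq]
    | succ k ih =>
      intro hk hmem
      have hmk : v.val + ((k : ℕ) : Fin n) ∈ S := mem_of_le v.val v.2 k (by omega)
      have h1 := ih (by omega) hmk
      have hadj : G.Adj ⟨v.val + ((k : ℕ) : Fin n), hmk⟩
          ⟨v.val + ((k + 1 : ℕ) : Fin n), hmem⟩ := by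
        show (SimpleGraph.cycleGraph n).Adj _ _
        rw [adj_iff]
        right
        show (v.val + ((k + 1 : ℕ) : Fin n)) - (v.val + ((k : ℕ) : Fin n)) = 1
        push_cast
        ring
      exact h1.trans hadj.reachable
  have reach_e : ∀ v : (↑S : Set (Fin n)),
      G.Reachable v ⟨e v.val, e_mem v.val v.2⟩ :=
    fun v => key v (d v.val) le_rfl (e_mem v.val v.2)
  -- the bijection
  set T := (S.filter (fun i : Fin n => i + 1 ∉ S)) with hT
  have eT : ∀ v ∈ S, e v ∈ T := by
    intro v hv
    rw [hT, Finset.mem_filter]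
    exact ⟨e_mem v hv, e_succ_not v⟩
  let F : G.ConnectedComponent → {x // x ∈ T} :=
    ConnectedComponent.lift (fun v => ⟨e v.val, eT v.val v.2⟩)
      (fun v w p _ => by
        have := e_reach v w ⟨p⟩
        exact Subtype.ext this)
  let Ginv : {x // x ∈ T} → G.ConnectedComponent := fun i =>
    G.connectedComponentMk ⟨i.val, (Finset.mem_filter.1 i.2).1⟩
  have left_inv : Function.LeftInverse Ginv F := by
    intro c
    induction c using ConnectedComponent.ind with
    | _ v =>
      show G.connectedComponentMk _ = G.connectedComponentMk v
      exact ConnectedComponent.sound (reach_e v).symm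
  have right_inv : Function.RightInverse Ginv F := by
    intro i
    have hi := Finset.mem_filter.1 i.2
    show (⟨e i.val, _⟩ : {x // x ∈ T}) = i
    exact Subtype.ext (e_fix i.val hi.2)
  have equiv : G.ConnectedComponent ≃ {x // x ∈ T} :=
    ⟨F, Ginv, left_inv, right_inv⟩
  rw [Nat.card_congr equiv, Nat.card_eq_finsetCard]
end

section
/- Let n ≥ 3 and γ ∈ ℝ. Let C_n be the cycle graph on Fin n and define J : Finset (Fin n) → ℤ by J(S) = H₀(C_n[S]) for S a proper subset and J(univ) = 2. Let g : Finset (Fin n) → ℝ satisfy Σ_{Q ⊆ Fin n, Q ≠ ∅} (−1)^{|Q|−1} g(Q) = 0 (vanishing of all geometric contributions), and set f(Q) := g(Q) − γ·J(Q). Then the n-partite information I_f(Fin n) := Σ_{P ⊆ Fin n, P ≠ ∅} (−1)^{|P|−1} f(P) equals (−1)^n · 2γ. (For a simple annular arrangement of N = n ≥ 3 subsystems of a topologically ordered ground state with entanglement entropies f(Q) = (boundary-law term) − (number of disjoint boundary components)·log 𝒟, the N-partite information is the topological invariant (−1)^N χ S_topo with χ = 2 and S_topo = γ = log 𝒟.)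 -/
open Finset SimpleGraph
open scoped Fin.CommRing


lemma H0_cycle_eq (n : ℕ) (hn : 3 ≤ n) (S : Finset (Fin n)) (hS : S ≠ Finset.univ) :
    haveI : NeZero n := ⟨by omega⟩
    H0 (SimpleGraph.cycleGraph n) (↑S : Set (Fin n)) =
      (S.filter (fun i => i + 1 ∉ S)).card := by
  haveI : NeZero n := ⟨by omega⟩
  have hval1 : ((1 : Fin n) : ℕ) = 1 := by
    rw [Fin.val_one']; exact Nat.mod_eq_of_lt (by omega)
  -- existence of a forward exit
  obtain ⟨w, hw⟩ : ∃ w, w ∉ S := by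
    by_contra h
    push_neg at h
    exact hS (Finset.eq_univ_iff_forall.mpr h)
  have hex : ∀ v : Fin n, ∃ k : ℕ, v + ((k + 1 : ℕ) : Fin n) ∉ S := by
    intro v
    by_cases hwv : w = v
    · refine ⟨n - 1, ?_⟩
      have : (n - 1 + 1 : ℕ) = n := by omega
      rw [this, Fin.natCast_self, add_zero, ← hwv]
      exact hw
    · refine ⟨(w - v).val - 1, ?_⟩
      have hd : (w - v) ≠ 0 := sub_ne_zero.mpr hwv
      have hdv : (w - v).val ≠ 0 := fun h => hd (Fin.ext (by simp [h]))
      have : ((w - v).val - 1 + 1 : ℕ) = (w - v).val := by omega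
      rw [this, Fin.cast_val_eq_self, add_sub_cancel]
      exact hw
  set K : Fin n → ℕ := fun v => Nat.find (hex v) with hK
  set ep : Fin n → Fin n := fun v => v + ((K v : ℕ) : Fin n) with hep
  have hK_mem : ∀ v ∈ S, ∀ m ≤ K v, v + ((m : ℕ) : Fin n) ∈ S := by
    intro v hv m hm
    match m with
    | 0 => simpa using hv
    | l + 1 =>
      have hl : l < K v := by omega
      have := Nat.find_min (hex v) hl
      simpa using this
  have hep_not : ∀ v : Fin n, ep v + 1 ∉ S := by
    intro v
    have h := Nat.find_spec (hex v)
    have : v + ((K v + 1 : ℕ) : Fin n) = ep v + 1 := by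
      push_cast
      ring
    rwa [this] at h
  have hep_mem : ∀ v ∈ S, ep v ∈ S := fun v hv => hK_mem v hv (K v) le_rfl
  -- reachability along consecutive runs
  have reach_step : ∀ (k : ℕ) (v : Fin n) (hv : v ∈ S) (h : ∀ m ≤ k, v + ((m : ℕ) : Fin n) ∈ S),
      ((SimpleGraph.cycleGraph n).induce (↑S : Set (Fin n))).Reachable ⟨v, hv⟩
        ⟨v + ((k : ℕ) : Fin n), h k le_rfl⟩ := by
    intro k
    induction k with
    | zero =>
      intro v hv h
      simp only [Nat.cast_zero, add_zero]
      exact SimpleGraph.Reachable.refl _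
    | succ k ih =>
      intro v hv h
      have h' : ∀ m ≤ k, v + ((m : ℕ) : Fin n) ∈ S := fun m hm => h m (by omega)
      refine (ih v hv h').trans ?_
      have hadj0 : (SimpleGraph.cycleGraph n).Adj (v + ((k : ℕ) : Fin n))
          (v + ((k + 1 : ℕ) : Fin n)) := by
        rw [SimpleGraph.cycleGraph_adj']
        right
        have : (v + ((k + 1 : ℕ) : Fin n)) - (v + ((k : ℕ) : Fin n)) = 1 := by
          push_cast
          ring
        rw [this, hval1]
      have hadj : ((SimpleGraph.cycleGraph n).induce (↑S : Set (Fin n))).Adj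
          ⟨v + ((k : ℕ) : Fin n), h' k le_rfl⟩ ⟨v + ((k + 1 : ℕ) : Fin n), h (k+1) le_rfl⟩ :=
        hadj0
      exact hadj.reachable
  have hreach : ∀ (v : Fin n) (hv : v ∈ S),
      ((SimpleGraph.cycleGraph n).induce (↑S : Set (Fin n))).Reachable ⟨v, hv⟩
        ⟨ep v, hep_mem v hv⟩ :=
    fun v hv => reach_step (K v) v hv (hK_mem v hv)
  -- ep is invariant along edges
  have hinv_step : ∀ a : Fin n, a ∈ S → a + 1 ∈ S → ep a = ep (a + 1) := by
    intro a ha ha1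
    have h0 : K a = K (a + 1) + 1 := by
      rw [hK, Nat.find_eq_iff]
      constructor
      · have h := Nat.find_spec (hex (a + 1))
        have : (a + 1) + ((K (a+1) + 1 : ℕ) : Fin n) = a + ((K (a+1) + 1 + 1 : ℕ) : Fin n) := by
          push_cast; ring
        rwa [this] at h
      · intro m hm
        match m with
        | 0 => simp only [Nat.cast_add, Nat.cast_zero, Nat.cast_one, zero_add, not_not]
               simpa using ha1
        | l + 1 =>
          have hl : l < K (a + 1) := Nat.lt_of_succ_lt_succ hm
          have h := Nat.find_min (hex (a + 1)) hl
          simp only [not_not] at h ⊢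
          have : (a + 1) + ((l + 1 : ℕ) : Fin n) = a + ((l + 1 + 1 : ℕ) : Fin n) := by
            push_cast; ring
          rwa [this] at h
    show a + ((K a : ℕ) : Fin n) = (a + 1) + ((K (a+1) : ℕ) : Fin n)
    rw [h0]
    push_cast
    ring
  have hinv_adj : ∀ u v : (↑S : Set (Fin n)),
      ((SimpleGraph.cycleGraph n).induce (↑S : Set (Fin n))).Adj u v → ep u.val = ep v.val := by
    intro u v huv
    have h : (SimpleGraph.cycleGraph n).Adj u.val v.val := huv
    rw [SimpleGraph.cycleGraph_adj'] at h
    have hu : (u : Fin n) ∈ S := u.prop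
    have hv : (v : Fin n) ∈ S := v.prop
    rcases h with h | h
    · have : (u : Fin n) - v = 1 := Fin.ext (by rw [h, hval1])
      have huv1 : (u : Fin n) = v + 1 := by rw [← this]; ring
      rw [huv1]
      exact (hinv_step v hv (huv1 ▸ hu)).symm
    · have : (v : Fin n) - u = 1 := Fin.ext (by rw [h, hval1])
      have hvu1 : (v : Fin n) = u + 1 := by rw [← this]; ring
      rw [hvu1]
      exact hinv_step u hu (hvu1 ▸ hv)
  -- build the equivalence
  set B : Finset (Fin n) := S.filter (fun i => i + 1 ∉ S) with hB
  have hwalk' : ∀ (u v : (↑S : Set (Fin n)))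
      (p : ((SimpleGraph.cycleGraph n).induce (↑S : Set (Fin n))).Walk u v),
      ep u.val = ep v.val := by
    intro u v p
    induction p with
    | nil => rfl
    | cons h q ih => exact (hinv_adj _ _ h).trans ih
  have hwalk : ∀ (u v : (↑S : Set (Fin n)))
      (p : ((SimpleGraph.cycleGraph n).induce (↑S : Set (Fin n))).Walk u v),
      p.IsPath → ep u.val = ep v.val := fun u v p _ => hwalk' u v p
  set Φ : ((SimpleGraph.cycleGraph n).induce (↑S : Set (Fin n))).ConnectedComponent → Fin n :=
    SimpleGraph.ConnectedComponent.lift (fun v => ep v.val) hwalk with hΦ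
  have hΦB : ∀ c, Φ c ∈ B := by
    apply SimpleGraph.ConnectedComponent.ind
    intro v
    simp only [hΦ, SimpleGraph.ConnectedComponent.lift_mk, hB, Finset.mem_filter]
    exact ⟨hep_mem v.val v.prop, hep_not v.val⟩
  have hepB : ∀ i ∈ B, ep i = i := by
    intro i hi
    rw [hB, Finset.mem_filter] at hi
    have hK0 : K i = 0 := by
      rw [hK, Nat.find_eq_zero]
      simpa using hi.2
    show i + ((K i : ℕ) : Fin n) = i
    rw [hK0]
    simp
  let e : ((SimpleGraph.cycleGraph n).induce (↑S : Set (Fin n))).ConnectedComponent ≃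
      {i : Fin n // i ∈ B} :=
    { toFun := fun c => ⟨Φ c, hΦB c⟩
      invFun := fun i => SimpleGraph.connectedComponentMk _
        ⟨i.val, (Finset.mem_filter.mp i.prop).1⟩
      left_inv := by
        apply SimpleGraph.ConnectedComponent.ind
        intro v
        simp only [hΦ, SimpleGraph.ConnectedComponent.lift_mk]
        exact SimpleGraph.ConnectedComponent.sound (hreach v.val v.prop).symm
      right_inv := by
        intro i
        apply Subtype.ext
        simp only [hΦ, SimpleGraph.ConnectedComponent.lift_mk]
        exact hepB i.val i.prop }
  rw [H0, Nat.card_congr e, Nat.card_eq_finsetCard]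

lemma sum_pow_neg_one_real {α : Type*} [DecidableEq α] (A : Finset α) (hA : A.Nonempty) :
    ∑ Q ∈ A.powerset, (-1 : ℝ) ^ Q.card = 0 := by
  have h := Finset.sum_powerset_neg_one_pow_card_of_nonempty (x := A) hA
  have : ((∑ Q ∈ A.powerset, (-1 : ℤ) ^ Q.card : ℤ) : ℝ)
      = ∑ Q ∈ A.powerset, (-1 : ℝ) ^ Q.card := by push_cast; rfl
  rw [← this, h]; norm_num


/-- For a simple annular arrangement of `N = n ≥ 3` subsystems of a topologically
ordered ground state with entanglement entropies
`f(Q) = g(Q) - γ J(Q)` (boundary-law term minus `(number of disjoint boundary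
components) · log 𝒟`), where the geometric contributions `g` cancel in the
alternating sum, the `n`-partite information is the topological invariant
`(-1)^n χ S_topo` with `χ = 2` and `S_topo = γ = log 𝒟`. -/
theorem multiInfo_annular_topological (n : ℕ) (hn : 3 ≤ n) (γ : ℝ)
    (g : Finset (Fin n) → ℝ)
    (hg : ∑ Q ∈ (Finset.univ : Finset (Fin n)).powerset.filter (· ≠ ∅),
        (-1 : ℝ) ^ (Q.card - 1) * g Q = 0)
    (f : Finset (Fin n) → ℝ)
    (hf : ∀ Q, f Q = g Q - γ * (Jcount n Q : ℝ)) :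
    ∑ P ∈ (Finset.univ : Finset (Fin n)).powerset.filter (· ≠ ∅),
      (-1 : ℝ) ^ (P.card - 1) * f P
    = (-1 : ℝ) ^ n * (2 * γ) := by
  haveI : NeZero n := ⟨by omega⟩
  have hval1 : ((1 : Fin n) : ℕ) = 1 := by
    rw [Fin.val_one']; exact Nat.mod_eq_of_lt (by omega)
  have h10 : (1 : Fin n) ≠ 0 := by
    intro h
    have := congrArg Fin.val h
    rw [hval1] at this
    simp at this
  set T := (Finset.univ : Finset (Fin n)).powerset.filter (· ≠ ∅) with hT
  -- step 1 : reduce to the J-sum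
  have step1 : ∑ P ∈ T, (-1 : ℝ) ^ (P.card - 1) * f P
      = -γ * ∑ P ∈ T, (-1 : ℝ) ^ (P.card - 1) * (Jcount n P : ℝ) := by
    calc ∑ P ∈ T, (-1 : ℝ) ^ (P.card - 1) * f P
        = ∑ P ∈ T, ((-1 : ℝ) ^ (P.card - 1) * g P
            + (-γ) * ((-1 : ℝ) ^ (P.card - 1) * (Jcount n P : ℝ))) := by
          refine Finset.sum_congr rfl fun P _ => ?_
          rw [hf]; ring
      _ = _ := by
          rw [Finset.sum_add_distrib, hg, ← Finset.mul_sum, zero_add]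
  rw [step1]
  -- step 2 : compute the J-sum
  have huT : (Finset.univ : Finset (Fin n)) ∈ T := by
    simp only [hT, Finset.mem_filter, Finset.mem_powerset]
    exact ⟨le_rfl, by simp [Finset.univ_nonempty.ne_empty]⟩
  have hJuniv : (Jcount n Finset.univ : ℝ) = 2 := by
    rw [Jcount, if_pos rfl]; norm_num
  have hrest : ∑ P ∈ T.erase Finset.univ,
      (-1 : ℝ) ^ (P.card - 1) * (Jcount n P : ℝ) = 0 := by
    have hJP : ∀ P ∈ T.erase Finset.univ, (Jcount n P : ℝ)
        = ∑ i : Fin n, (if i ∈ P ∧ i + 1 ∉ P then (1 : ℝ) else 0) := by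
      intro P hP
      rw [Finset.mem_erase] at hP
      rw [Jcount, if_neg hP.1, H0_cycle_eq n hn P hP.1]
      have : P.filter (fun i => i + 1 ∉ P)
          = Finset.univ.filter (fun i => i ∈ P ∧ i + 1 ∉ P) := by
        ext x; simp [and_comm]
      rw [this, Finset.card_filter]
      push_cast
      exact Finset.sum_congr rfl fun i _ => by split <;> norm_num
    calc ∑ P ∈ T.erase Finset.univ, (-1 : ℝ) ^ (P.card - 1) * (Jcount n P : ℝ)
        = ∑ P ∈ T.erase Finset.univ, ∑ i : Fin n,
            (if i ∈ P ∧ i + 1 ∉ P then (-1 : ℝ) ^ (P.card - 1) else 0) := by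
          refine Finset.sum_congr rfl fun P hP => ?_
          rw [hJP P hP, Finset.mul_sum]
          exact Finset.sum_congr rfl fun i _ => by split <;> norm_num
      _ = ∑ i : Fin n, ∑ P ∈ T.erase Finset.univ,
            (if i ∈ P ∧ i + 1 ∉ P then (-1 : ℝ) ^ (P.card - 1) else 0) :=
          Finset.sum_comm
      _ = 0 := by
          refine Finset.sum_eq_zero fun i _ => ?_
          rw [← Finset.sum_filter]
          have hne1 : i + 1 ≠ i := fun h => h10 (by rwa [add_eq_left] at h)
          set A : Finset (Fin n) := ((Finset.univ : Finset (Fin n)).erase (i+1)).erase i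
            with hAdef
          have hiA : i ∉ A := Finset.notMem_erase _ _
          have hi1A : i + 1 ∉ A := fun h =>
            Finset.notMem_erase _ _ (Finset.mem_of_mem_erase h)
          have hAne : A.Nonempty := by
            rw [← Finset.card_pos, hAdef,
              Finset.card_erase_of_mem (Finset.mem_erase.mpr ⟨hne1.symm, Finset.mem_univ _⟩),
              Finset.card_erase_of_mem (Finset.mem_univ _), Finset.card_univ,
              Fintype.card_fin]
            omega
          have hset : (T.erase Finset.univ).filter (fun P => i ∈ P ∧ i + 1 ∉ P)
              = A.powerset.image (insert i) := by
            ext P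
            simp only [Finset.mem_filter, Finset.mem_erase, hT, Finset.mem_powerset,
              Finset.mem_image]
            constructor
            · rintro ⟨⟨-, -, -⟩, hiP, hi1P⟩
              refine ⟨P.erase i, ?_, Finset.insert_erase hiP⟩
              intro x hx
              rw [Finset.mem_erase] at hx
              rw [hAdef, Finset.mem_erase, Finset.mem_erase]
              exact ⟨hx.1, fun h => hi1P (h ▸ hx.2), Finset.mem_univ _⟩
            · rintro ⟨Q, hQ, rfl⟩
              have hi1 : i + 1 ∉ insert i Q := by
                rw [Finset.mem_insert]
                rintro (h | h)
                · exact hne1 h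
                · exact hi1A (hQ h)
              refine ⟨⟨fun h => hi1 (h ▸ Finset.mem_univ _), ?_, ?_⟩,
                Finset.mem_insert_self _ _, hi1⟩
              · exact Finset.subset_univ _
              · exact Finset.insert_ne_empty _ _
          rw [hset, Finset.sum_image (fun Q hQ Q' hQ' h => by
            rw [← Finset.erase_insert (fun hi => hiA ((Finset.mem_powerset.mp hQ) hi)), h,
              Finset.erase_insert (fun hi => hiA ((Finset.mem_powerset.mp hQ') hi))])]
          have : ∀ Q ∈ A.powerset, (-1 : ℝ) ^ ((insert i Q).card - 1) = (-1 : ℝ) ^ Q.card := by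
            intro Q hQ
            rw [Finset.card_insert_of_notMem (fun hi => hiA ((Finset.mem_powerset.mp hQ) hi))]
            simp
          rw [Finset.sum_congr rfl this]
          exact sum_pow_neg_one_real A hAne
  have step2 : ∑ P ∈ T, (-1 : ℝ) ^ (P.card - 1) * (Jcount n P : ℝ)
      = (-1 : ℝ) ^ (n - 1) * 2 := by
    rw [← Finset.sum_erase_add T _ huT, hrest, zero_add, hJuniv, Finset.card_univ,
      Fintype.card_fin]
  rw [step2]
  have hnpow : (-1 : ℝ) ^ n = -(-1 : ℝ) ^ (n - 1) := by
    conv_lhs => rw [show n = (n - 1) + 1 by omega]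
    rw [pow_succ]; ring
  rw [hnpow]; ring
end
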